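/- arXiv:2504.02266 — 6 statements merged into one kernel-verified Lean document; each statement's English description precedes it below -/
import Mathlib

section
/- (Lemma 3.2) For all 1 ≤ i < j ≤ r, one has the equality of linear endomorphisms of E: 2·Ω_{ij} = −κ_{ij} + H_i + H_j. -/
/-- **Lemma 3.2.**  Let `E` be the exterior algebra (a complex vector space) carrying
operators `x a i` (exterior multiplication by `v_{a,i}`) and `d a i` (contraction with
`v*_{a,i}`) satisfying the canonical anticommutation relations.  With
`Ω i j = Σ_{a,b} x_{a,i} ∂_{b,i} x_{b,j} ∂_{a,j}`,
`κ i j = Σ_{a,b} (x_{a,i} ∂_{a,j} x_{b,j} ∂_{b,i} + x_{b,j} ∂_{b,i} x_{a,i} ∂_{a,j})`,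
`H i = Σ_a x_{a,i} ∂_{a,i}`, one has `2 Ω_{ij} = -κ_{ij} + H_i + H_j` for all `i < j`. -/
theorem lemma3_2 (t r : ℕ) (ht : 0 < t) (hr : 0 < r)
    (E : Type*) [AddCommGroup E] [Module ℂ E]
    (x d : Fin t → Fin r → Module.End ℂ E)
    (hxx : ∀ a i b j, x a i * x b j + x b j * x a i = 0)
    (hdd : ∀ a i b j, d a i * d b j + d b j * d a i = 0)
    (hxd : ∀ a i b j, x a i * d b j + d b j * x a i =
      if a = b ∧ i = j then 1 else 0)
    (Ω : Fin r → Fin r → Module.End ℂ E)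
    (hΩ : ∀ i j, Ω i j = ∑ a : Fin t, ∑ b : Fin t, x a i * d b i * x b j * d a j)
    (κ : Fin r → Fin r → Module.End ℂ E)
    (hκ : ∀ i j, κ i j = ∑ a : Fin t, ∑ b : Fin t,
      (x a i * d a j * x b j * d b i + x b j * d b i * x a i * d a j))
    (H : Fin r → Module.End ℂ E)
    (hH : ∀ i, H i = ∑ a : Fin t, x a i * d a i) :
    ∀ i j : Fin r, i < j → 2 • Ω i j = -κ i j + H i + H j := by
  intro i j hij
  have hij' : i ≠ j := ne_of_lt hij
  -- anticommutation helpers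
  have xneg : ∀ (a b : Fin t) (p q : Fin r), x a p * x b q = -(x b q * x a p) :=
    fun a b p q => eq_neg_of_add_eq_zero_left (hxx a p b q)
  have dneg : ∀ (a b : Fin t) (p q : Fin r), d a p * d b q = -(d b q * d a p) :=
    fun a b p q => eq_neg_of_add_eq_zero_left (hdd a p b q)
  have danti : ∀ (a b : Fin t) (p q : Fin r), ¬(b = a ∧ q = p) →
      d a p * x b q = -(x b q * d a p) := by
    intro a b p q h
    have h2 := hxd b q a p
    rw [if_neg h] at h2
    exact eq_neg_of_add_eq_zero_right h2
  have same : ∀ (a : Fin t) (p : Fin r), d a p * x a p = 1 - x a p * d a p := by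
    intro a p
    have h2 := hxd a p a p
    rw [if_pos ⟨rfl, rfl⟩] at h2
    exact eq_sub_of_add_eq' h2
  have key : ∀ a b : Fin t, 2 • (x a i * d b i * x b j * d a j)
      = -(x a i * d a j * x b j * d b i + x b j * d b i * x a i * d a j)
        + (if a = b then x a i * d a i + x b j * d a j else 0) := by
    intro a b
    by_cases hab : a = b
    · subst hab
      rw [if_pos rfl]
      have hT : x a i * d a i * x a j * d a j = x a i * x a j * (d a j * d a i) := by
        calc x a i * d a i * x a j * d a j
            = x a i * (d a i * x a j) * d a j := by noncomm_ring
          _ = x a i * (-(x a j * d a i)) * d a j := by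
              rw [danti a a i j (by simp [hij'.symm])]
          _ = -(x a i * x a j * (d a i * d a j)) := by noncomm_ring
          _ = -(x a i * x a j * (-(d a j * d a i))) := by rw [dneg a a i j]
          _ = x a i * x a j * (d a j * d a i) := by noncomm_ring
      have hA : x a i * d a j * x a j * d a i
          = x a i * d a i - x a i * x a j * (d a j * d a i) := by
        calc x a i * d a j * x a j * d a i
            = x a i * (d a j * x a j) * d a i := by noncomm_ring
          _ = x a i * (1 - x a j * d a j) * d a i := by rw [same a j]
          _ = x a i * d a i - x a i * x a j * (d a j * d a i) := by noncomm_ring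
      have hB : x a j * d a i * x a i * d a j
          = x a j * d a j - x a i * x a j * (d a j * d a i) := by
        calc x a j * d a i * x a i * d a j
            = x a j * (d a i * x a i) * d a j := by noncomm_ring
          _ = x a j * (1 - x a i * d a i) * d a j := by rw [same a i]
          _ = x a j * d a j - x a j * x a i * (d a i * d a j) := by noncomm_ring
          _ = x a j * d a j - (-(x a i * x a j)) * (-(d a j * d a i)) := by
              rw [xneg a a j i, dneg a a i j]
          _ = x a j * d a j - x a i * x a j * (d a j * d a i) := by noncomm_ring
      rw [hT, hA, hB]
      abel
    · rw [if_neg hab]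
      have hT : x a i * d b i * x b j * d a j = x a i * x b j * (d a j * d b i) := by
        calc x a i * d b i * x b j * d a j
            = x a i * (d b i * x b j) * d a j := by noncomm_ring
          _ = x a i * (-(x b j * d b i)) * d a j := by
              rw [danti b b i j (by simp [hij'.symm])]
          _ = -(x a i * x b j * (d b i * d a j)) := by noncomm_ring
          _ = -(x a i * x b j * (-(d a j * d b i))) := by rw [dneg b a i j]
          _ = x a i * x b j * (d a j * d b i) := by noncomm_ring
      have hA : x a i * d a j * x b j * d b i = -(x a i * x b j * (d a j * d b i)) := by
        calc x a i * d a j * x b j * d b i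
            = x a i * (d a j * x b j) * d b i := by noncomm_ring
          _ = x a i * (-(x b j * d a j)) * d b i := by
              rw [danti a b j j (by simp [Ne.symm hab])]
          _ = -(x a i * x b j * (d a j * d b i)) := by noncomm_ring
      have hB : x b j * d b i * x a i * d a j = -(x a i * x b j * (d a j * d b i)) := by
        calc x b j * d b i * x a i * d a j
            = x b j * (d b i * x a i) * d a j := by noncomm_ring
          _ = x b j * (-(x a i * d b i)) * d a j := by
              rw [danti b a i i (by simp [hab])]
          _ = -(x b j * x a i * (d b i * d a j)) := by noncomm_ring
          _ = -((-(x a i * x b j)) * (-(d a j * d b i))) := by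
              rw [xneg b a j i, dneg b a i j]
          _ = -(x a i * x b j * (d a j * d b i)) := by noncomm_ring
      rw [hT, hA, hB]
      abel
  calc 2 • Ω i j
      = ∑ a : Fin t, ∑ b : Fin t, 2 • (x a i * d b i * x b j * d a j) := by
        rw [hΩ]; simp only [Finset.smul_sum]
    _ = ∑ a : Fin t, ∑ b : Fin t,
        (-(x a i * d a j * x b j * d b i + x b j * d b i * x a i * d a j)
          + (if a = b then x a i * d a i + x b j * d a j else 0)) :=
        Finset.sum_congr rfl fun a _ => Finset.sum_congr rfl fun b _ => key a b
    _ = -κ i j + H i + H j := by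
        rw [hκ, hH, hH]
        simp only [Finset.sum_add_distrib, Finset.sum_neg_distrib, Finset.sum_ite_eq,
          Finset.mem_univ, if_true]
        abel
end

section
/- (Theorem 3.3, first part) Let f : U → E be a differentiable function such that H_i(f(z)) = β_i·f(z) for all z ∈ U and all 1 ≤ i ≤ r. Then f satisfies the Knizhnik–Zamolodchikov system ∂f/∂z_k = ℏ·Σ_{j ≠ k} (z_k − z_j)^{−1}·Ω_{kj}(f) for all k, if and only if the function g(z) := (Π_{1 ≤ i < j ≤ r} (z_i − z_j)^{−(β_i+β_j)ℏ/2})·f(z) satisfies ∂g/∂z_k = −(ℏ/2)·Σ_{j ≠ k} (z_k − z_j)^{−1}·κ_{kj}(g) for all k. -/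
lemma car_key {R : Type*} [Ring R] (A B P Q δ : R)
    (hδA : A * δ = δ * A) (hδB : B * δ = δ * B)
    (h1 : P * B = δ - B * P) (h2 : Q * A = δ - A * Q)
    (h3 : Q * B = -(B * Q)) (h4 : P * Q = -(Q * P)) (h5 : B * A = -(A * B)) :
    A * P * B * Q + B * Q * A * P + 2 * (A * Q * B * P)
      = δ * (A * Q) + δ * (B * P) := by
  have e1 : A * P * B * Q = δ * (A * Q) + A * B * Q * P := by
    calc A * P * B * Q = A * (P * B) * Q := by noncomm_ring
      _ = A * (δ - B * P) * Q := by rw [h1]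
      _ = A * δ * Q - A * (B * (P * Q)) := by noncomm_ring
      _ = A * δ * Q - A * (B * (-(Q * P))) := by rw [h4]
      _ = δ * (A * Q) + A * B * Q * P := by rw [hδA]; noncomm_ring
  have e2 : B * Q * A * P = δ * (B * P) + A * B * Q * P := by
    calc B * Q * A * P = B * (Q * A) * P := by noncomm_ring
      _ = B * (δ - A * Q) * P := by rw [h2]
      _ = B * δ * P - (B * A) * (Q * P) := by noncomm_ring
      _ = B * δ * P - (-(A * B)) * (Q * P) := by rw [h5]
      _ = δ * (B * P) + A * B * Q * P := by rw [hδB]; noncomm_ring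
  have e3 : A * Q * B * P = -(A * B * Q * P) := by
    calc A * Q * B * P = A * (Q * B) * P := by noncomm_ring
      _ = A * (-(B * Q)) * P := by rw [h3]
      _ = -(A * B * Q * P) := by noncomm_ring
  rw [e1, e2, e3]; noncomm_ring

lemma kappa_key {R : Type*} [Ring R] {t r : ℕ}
    (x d : Fin t → Fin r → R)
    (hxx : ∀ a i b j, x a i * x b j + x b j * x a i = 0)
    (hdd : ∀ a i b j, d a i * d b j + d b j * d a i = 0)
    (hxd : ∀ a i b j, x a i * d b j + d b j * x a i =
      if a = b ∧ i = j then 1 else 0)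
    (i j : Fin r) (hij : i ≠ j) :
    (∑ a : Fin t, ∑ b : Fin t,
      (x a i * d a j * x b j * d b i + x b j * d b i * x a i * d a j))
      + 2 * (∑ a : Fin t, ∑ b : Fin t, x a i * d b i * x b j * d a j)
    = (∑ a : Fin t, x a i * d a i) + ∑ a : Fin t, x a j * d a j := by
  have hji : j ≠ i := hij.symm
  have key : ∀ a b : Fin t,
      (x a i * d a j * x b j * d b i + x b j * d b i * x a i * d a j)
        + 2 * (x a i * d b i * x b j * d a j)
      = (if a = b then (1:R) else 0) * (x a i * d b i)
        + (if a = b then (1:R) else 0) * (x b j * d a j) := by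
    intro a b
    set δ : R := if a = b then (1:R) else 0 with hδ
    have h1 : d a j * x b j = δ - x b j * d a j := by
      have h := hxd b j a j
      simp only [and_true] at h
      have : (if b = a then (1:R) else 0) = δ := by simp [hδ, eq_comm]
      rw [this] at h
      exact eq_sub_of_add_eq' h
    have h2 : d b i * x a i = δ - x a i * d b i := by
      have h := hxd a i b i
      simp only [and_true] at h
      exact eq_sub_of_add_eq' h
    have h3 : d b i * x b j = -(x b j * d b i) := by
      have h := hxd b j b i
      simp only [hji, and_false, if_false] at h
      exact eq_neg_of_add_eq_zero_right h
    have h4 : d a j * d b i = -(d b i * d a j) := by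
      have h := hdd b i a j
      exact eq_neg_of_add_eq_zero_right h
    have h5 : x b j * x a i = -(x a i * x b j) := by
      have h := hxx a i b j
      exact eq_neg_of_add_eq_zero_right h
    have hδA : x a i * δ = δ * x a i := by
      simp only [hδ]; split_ifs <;> simp
    have hδB : x b j * δ = δ * x b j := by
      simp only [hδ]; split_ifs <;> simp
    exact car_key (x a i) (x b j) (d a j) (d b i) δ hδA hδB h1 h2 h3 h4 h5
  calc (∑ a : Fin t, ∑ b : Fin t,
      (x a i * d a j * x b j * d b i + x b j * d b i * x a i * d a j))
      + 2 * (∑ a : Fin t, ∑ b : Fin t, x a i * d b i * x b j * d a j)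
      = ∑ a : Fin t, ∑ b : Fin t,
        ((x a i * d a j * x b j * d b i + x b j * d b i * x a i * d a j)
          + 2 * (x a i * d b i * x b j * d a j)) := by
        rw [Finset.mul_sum]
        rw [← Finset.sum_add_distrib]
        refine Finset.sum_congr rfl fun a _ => ?_
        rw [Finset.mul_sum, ← Finset.sum_add_distrib]
    _ = ∑ a : Fin t, ∑ b : Fin t,
        ((if a = b then (1:R) else 0) * (x a i * d b i)
          + (if a = b then (1:R) else 0) * (x b j * d a j)) := by
        refine Finset.sum_congr rfl fun a _ => Finset.sum_congr rfl fun b _ => key a b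
    _ = (∑ a : Fin t, x a i * d a i) + ∑ a : Fin t, x a j * d a j := by
        rw [← Finset.sum_add_distrib]
        refine Finset.sum_congr rfl fun a _ => ?_
        rw [Finset.sum_add_distrib]
        congr 1 <;> simp [ite_mul, Finset.sum_ite_eq]

lemma factor_deriv {r : ℕ} (γ : ℂ) (i j : Fin r) (z : Fin r → ℝ) (hpos : 0 < z i - z j) :
    HasFDerivAt (fun z : Fin r → ℝ => ((z i - z j : ℝ) : ℂ) ^ γ)
      ((γ * ((z i - z j : ℝ) : ℂ) ^ (γ - 1)) •
        (Complex.ofRealCLM.comp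
          (ContinuousLinearMap.proj (R := ℝ) (φ := fun _ : Fin r => ℝ) i
            - ContinuousLinearMap.proj j))) z := by
  have hmem : ((z i - z j : ℝ) : ℂ) ∈ Complex.slitPlane :=
    Complex.ofReal_mem_slitPlane.2 hpos
  have hout : HasDerivAt (fun w : ℂ => w ^ γ)
      (γ * ((z i - z j : ℝ) : ℂ) ^ (γ - 1)) ((z i - z j : ℝ) : ℂ) :=
    (Complex.hasStrictDerivAt_cpow_const hmem).hasDerivAt
  have hin : HasFDerivAt (fun z : Fin r → ℝ => ((z i - z j : ℝ) : ℂ))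
      (Complex.ofRealCLM.comp
        (ContinuousLinearMap.proj (R := ℝ) (φ := fun _ : Fin r => ℝ) i
          - ContinuousLinearMap.proj j)) z :=
    (Complex.ofRealCLM.comp
      (ContinuousLinearMap.proj (R := ℝ) (φ := fun _ : Fin r => ℝ) i
        - ContinuousLinearMap.proj j)).hasFDerivAt
  exact hout.comp_hasFDerivAt z hin

lemma Phi_ne_zero {r : ℕ} (c : Fin r → Fin r → ℂ) (z : Fin r → ℝ)
    (hz : ∀ i j : Fin r, i < j → z j < z i) :
    (∏ i : Fin r, ∏ j ∈ Finset.univ.filter (fun j => i < j),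
        ((z i - z j : ℝ) : ℂ) ^ (c i j)) ≠ 0 := by
  rw [Finset.prod_ne_zero_iff]
  intro i _
  rw [Finset.prod_ne_zero_iff]
  intro j hj
  have hij : i < j := (Finset.mem_filter.1 hj).2
  have hpos : (0:ℝ) < z i - z j := sub_pos.2 (hz i j hij)
  simp only [ne_eq, Complex.cpow_eq_zero_iff, not_and, not_not]
  intro h0
  exfalso
  exact (Complex.ofReal_ne_zero.2 (ne_of_gt hpos)) h0

lemma Phi_deriv {r : ℕ} (c : Fin r → Fin r → ℂ) (hsym : ∀ i j, c i j = c j i)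
    (z : Fin r → ℝ) (hz : ∀ i j : Fin r, i < j → z j < z i) (k : Fin r) :
    ∃ Φ' : (Fin r → ℝ) →L[ℝ] ℂ,
      HasFDerivAt (fun z : Fin r → ℝ => ∏ i : Fin r,
          ∏ j ∈ Finset.univ.filter (fun j => i < j),
            ((z i - z j : ℝ) : ℂ) ^ (c i j)) Φ' z ∧
      Φ' (Pi.single k 1) =
        (∏ i : Fin r, ∏ j ∈ Finset.univ.filter (fun j => i < j),
            ((z i - z j : ℝ) : ℂ) ^ (c i j)) *
          ∑ j ∈ Finset.univ.erase k, c k j * ((z k - z j : ℝ) : ℂ)⁻¹ := by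
  classical
  set S : Fin r → Finset (Fin r) := fun i => Finset.univ.filter (fun j => i < j) with hS
  set w : Fin r → Fin r → ℂ := fun i j => ((z i - z j : ℝ) : ℂ) with hw
  set φ : Fin r → Fin r → (Fin r → ℝ) → ℂ := fun i j z => ((z i - z j : ℝ) : ℂ) ^ (c i j) with hφ
  set L : Fin r → Fin r → ((Fin r → ℝ) →L[ℝ] ℂ) := fun i j =>
    Complex.ofRealCLM.comp
      (ContinuousLinearMap.proj (R := ℝ) (φ := fun _ : Fin r => ℝ) i
        - ContinuousLinearMap.proj j) with hL
  set ψ : Fin r → Fin r → ((Fin r → ℝ) →L[ℝ] ℂ) := fun i j =>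
    (c i j * w i j ^ (c i j - 1)) • L i j with hψ
  set G : Fin r → (Fin r → ℝ) → ℂ := fun i z => ∏ j ∈ S i, φ i j z with hG
  set G' : Fin r → ((Fin r → ℝ) →L[ℝ] ℂ) := fun i =>
    ∑ j ∈ S i, (∏ j' ∈ (S i).erase j, φ i j' z) • ψ i j with hG'
  have hpos : ∀ i j : Fin r, i < j → (0:ℝ) < z i - z j := fun i j hij => sub_pos.2 (hz i j hij)
  have hGd : ∀ i ∈ (Finset.univ : Finset (Fin r)), HasFDerivAt (G i) (G' i) z := by
    intro i _
    exact HasFDerivAt.finset_prod (fun j hj =>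
      factor_deriv (c i j) i j z (hpos i j (Finset.mem_filter.1 hj).2))
  have hΦd : HasFDerivAt (fun z : Fin r → ℝ => ∏ i : Fin r, ∏ j ∈ S i, φ i j z)
      (∑ i : Fin r, (∏ i' ∈ Finset.univ.erase i, G i' z) • G' i) z :=
    HasFDerivAt.finset_prod hGd
  refine ⟨_, hΦd, ?_⟩
  simp only [ContinuousLinearMap.coe_sum', Finset.sum_apply, ContinuousLinearMap.coe_smul',
    Pi.smul_apply, hG', ContinuousLinearMap.sum_apply, ContinuousLinearMap.smul_apply, hψ, hL,
    ContinuousLinearMap.comp_apply, ContinuousLinearMap.sub_apply,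
    ContinuousLinearMap.proj_apply, Complex.ofRealCLM_apply, smul_eq_mul, Pi.single_apply]
  have hΦG : (∏ i : Fin r, ∏ j ∈ Finset.filter (fun j => i < j) Finset.univ,
      ((z i - z j : ℝ) : ℂ) ^ c i j) = ∏ i', G i' z := rfl
  rw [hΦG]
  have hterm : ∀ i : Fin r, ∀ j ∈ S i,
      (∏ i' ∈ Finset.univ.erase i, G i' z) *
        ((∏ j' ∈ (S i).erase j, φ i j' z) *
          (c i j * w i j ^ (c i j - 1) *
            (((if i = k then (1:ℝ) else 0) - if j = k then (1:ℝ) else 0 : ℝ) : ℂ)))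
      = (if i = k then (∏ i', G i' z) * (c k j * (w k j)⁻¹) else 0)
        + (if j = k then -((∏ i', G i' z) * (c i k * (w i k)⁻¹)) else 0) := by
    intro i j hj
    have hij : i < j := (Finset.mem_filter.1 hj).2
    have hwne : w i j ≠ 0 := Complex.ofReal_ne_zero.2 (ne_of_gt (hpos i j hij))
    have hQ : w i j ^ (c i j - 1) = φ i j z / w i j := by
      rw [Complex.cpow_sub _ _ hwne, Complex.cpow_one]
    have hBφ : (∏ j' ∈ (S i).erase j, φ i j' z) * φ i j z = G i z :=
      Finset.prod_erase_mul _ _ hj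
    have hAG : (∏ i' ∈ Finset.univ.erase i, G i' z) * G i z = ∏ i', G i' z :=
      Finset.prod_erase_mul _ _ (Finset.mem_univ i)
    by_cases hik : i = k
    · subst hik
      have hji : ¬ j = i := hij.ne'
      rw [if_pos rfl, if_neg hji, if_pos rfl, if_neg hji, add_zero]
      calc (∏ i' ∈ Finset.univ.erase i, G i' z) *
            ((∏ j' ∈ (S i).erase j, φ i j' z) *
              (c i j * w i j ^ (c i j - 1) * ((((1:ℝ) - 0 : ℝ)) : ℂ)))
          = ((∏ i' ∈ Finset.univ.erase i, G i' z) *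
              ((∏ j' ∈ (S i).erase j, φ i j' z) * φ i j z)) * (c i j * (w i j)⁻¹) := by
            rw [hQ]; push_cast; ring
        _ = (∏ i', G i' z) * (c i j * (w i j)⁻¹) := by rw [hBφ, hAG]
    · by_cases hjk : j = k
      · subst hjk
        rw [if_neg hik, if_pos rfl, if_neg hik, if_pos rfl, zero_add]
        calc (∏ i' ∈ Finset.univ.erase i, G i' z) *
              ((∏ j' ∈ (S i).erase j, φ i j' z) *
                (c i j * w i j ^ (c i j - 1) * ((((0:ℝ) - 1 : ℝ)) : ℂ)))
            = -(((∏ i' ∈ Finset.univ.erase i, G i' z) *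
                ((∏ j' ∈ (S i).erase j, φ i j' z) * φ i j z)) * (c i j * (w i j)⁻¹)) := by
              rw [hQ]; push_cast; ring
          _ = -((∏ i', G i' z) * (c i j * (w i j)⁻¹)) := by rw [hBφ, hAG]
      · simp [hik, hjk]
  calc ∑ i : Fin r, (∏ i' ∈ Finset.univ.erase i, G i' z) *
        ∑ j ∈ S i, (∏ j' ∈ (S i).erase j, φ i j' z) *
          (c i j * w i j ^ (c i j - 1) *
            (((if i = k then (1:ℝ) else 0) - if j = k then (1:ℝ) else 0 : ℝ) : ℂ))
      = ∑ i : Fin r, ∑ j ∈ S i,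
          ((if i = k then (∏ i', G i' z) * (c k j * (w k j)⁻¹) else 0)
            + (if j = k then -((∏ i', G i' z) * (c i k * (w i k)⁻¹)) else 0)) := by
        refine Finset.sum_congr rfl fun i _ => ?_
        rw [Finset.mul_sum]
        exact Finset.sum_congr rfl fun j hj => hterm i j hj
    _ = (∑ j ∈ S k, (∏ i', G i' z) * (c k j * (w k j)⁻¹))
        + ∑ i ∈ Finset.univ.filter (fun i => i < k),
            -((∏ i', G i' z) * (c i k * (w i k)⁻¹)) := by
        have inner : ∀ i : Fin r,
            (∑ j ∈ S i, ((if i = k then (∏ i', G i' z) * (c k j * (w k j)⁻¹) else 0)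
              + (if j = k then -((∏ i', G i' z) * (c i k * (w i k)⁻¹)) else 0)))
            = (if i = k then (∑ j ∈ S i, (∏ i', G i' z) * (c k j * (w k j)⁻¹)) else 0)
              + (if i < k then -((∏ i', G i' z) * (c i k * (w i k)⁻¹)) else 0) := by
          intro i
          rw [Finset.sum_add_distrib]
          congr 1
          · split_ifs with h <;> simp
          · rw [Finset.sum_ite_eq' (S i) k]
            simp [hS]
        rw [Finset.sum_congr rfl (fun i _ => inner i), Finset.sum_add_distrib,
          Finset.sum_ite_eq' Finset.univ k, ← Finset.sum_filter]
        simp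
    _ = (∏ i', G i' z) * ∑ j ∈ Finset.univ.erase k, c k j * (w k j)⁻¹ := by
        have hFk : (∏ i', G i' z) * (c k k * (w k k)⁻¹) = 0 := by
          simp [hw, sub_self]
        have hsplit : Finset.univ.filter (fun j => ¬ k < j)
            = insert k (Finset.univ.filter (fun j : Fin r => j < k)) := by
          ext j
          simp [not_lt, le_iff_lt_or_eq, or_comm]
        rw [Finset.mul_sum]
        have hR : ∑ i ∈ Finset.univ.erase k, (∏ i', G i' z) * (c k i * (w k i)⁻¹)
            = (∑ j ∈ S k, (∏ i', G i' z) * (c k j * (w k j)⁻¹))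
              + ∑ i ∈ Finset.univ.filter (fun i => i < k),
                  (∏ i', G i' z) * (c k i * (w k i)⁻¹) := by
          rw [Finset.sum_erase (f := fun i => (∏ i' : Fin r, G i' z) * (c k i * (w k i)⁻¹)) Finset.univ hFk,
            ← Finset.sum_filter_add_sum_filter_not Finset.univ (fun j => k < j), hsplit,
            Finset.sum_insert (by simp), hFk, zero_add]
        rw [hR]
        congr 1
        refine Finset.sum_congr rfl fun i hi => ?_
        have hik : i < k := (Finset.mem_filter.1 hi).2
        have hwn : w k i = -(w i k) := by
          simp only [hw]
          push_cast
          ring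
        rw [hsym k i, hwn, inv_neg]
        ring


/-- **Theorem 3.3, first part.**  Under the CAR setup, a differentiable function
`f : U → E` lying in the `β`-weight space (`H_i f = β_i f`) satisfies the KZ system
`∂f/∂z_k = ℏ Σ_{j≠k} (z_k - z_j)⁻¹ Ω_{kj} f` iff
`g(z) = (Π_{i<j} (z_i - z_j)^{-(β_i+β_j)ℏ/2}) f(z)` satisfies
`∂g/∂z_k = -(ℏ/2) Σ_{j≠k} (z_k - z_j)⁻¹ κ_{kj} g`. -/
theorem theorem3_3_first (t r : ℕ) (ht : 0 < t) (hr : 0 < r)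
    (E : Type*) [NormedAddCommGroup E] [NormedSpace ℂ E]
    (x d : Fin t → Fin r → Module.End ℂ E)
    (hxx : ∀ a i b j, x a i * x b j + x b j * x a i = 0)
    (hdd : ∀ a i b j, d a i * d b j + d b j * d a i = 0)
    (hxd : ∀ a i b j, x a i * d b j + d b j * x a i =
      if a = b ∧ i = j then 1 else 0)
    (Ω : Fin r → Fin r → Module.End ℂ E)
    (hΩ : ∀ i j, Ω i j = ∑ a : Fin t, ∑ b : Fin t, x a i * d b i * x b j * d a j)
    (κ : Fin r → Fin r → Module.End ℂ E)
    (hκ : ∀ i j, κ i j = ∑ a : Fin t, ∑ b : Fin t,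
      (x a i * d a j * x b j * d b i + x b j * d b i * x a i * d a j))
    (H : Fin r → Module.End ℂ E)
    (hH : ∀ i, H i = ∑ a : Fin t, x a i * d a i)
    (ℏ : ℂ) (β : Fin r → ℂ)
    (U : Set (Fin r → ℝ)) (hU : U = {z | ∀ i j : Fin r, i < j → z j < z i})
    (f : (Fin r → ℝ) → E)
    (hfdiff : ∀ z ∈ U, DifferentiableAt ℝ f z)
    (hfwt : ∀ z ∈ U, ∀ i, H i (f z) = β i • f z)
    (g : (Fin r → ℝ) → E)
    (hg : ∀ z, g z =
      (∏ i : Fin r, ∏ j ∈ Finset.univ.filter (fun j => i < j),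
        ((z i - z j : ℝ) : ℂ) ^ (-(β i + β j) * ℏ / 2)) • f z) :
    (∀ z ∈ U, ∀ k : Fin r, fderiv ℝ f z (Pi.single k 1)
        = ℏ • ∑ j ∈ Finset.univ.erase k, ((z k - z j : ℝ) : ℂ)⁻¹ • Ω k j (f z))
    ↔ (∀ z ∈ U, ∀ k : Fin r, fderiv ℝ g z (Pi.single k 1)
        = (-(ℏ / 2)) • ∑ j ∈ Finset.univ.erase k,
            ((z k - z j : ℝ) : ℂ)⁻¹ • κ k j (g z)) := by
  have hgfun : g = fun z => (∏ i : Fin r, ∏ j ∈ Finset.univ.filter (fun j => i < j),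
      ((z i - z j : ℝ) : ℂ) ^ (-(β i + β j) * ℏ / 2)) • f z := funext hg
  subst hgfun
  suffices key : ∀ z ∈ U, ∀ k : Fin r,
      ((fderiv ℝ f z (Pi.single k 1)
          = ℏ • ∑ j ∈ Finset.univ.erase k, ((z k - z j : ℝ) : ℂ)⁻¹ • Ω k j (f z)) ↔
        (fderiv ℝ (fun z => (∏ i : Fin r, ∏ j ∈ Finset.univ.filter (fun j => i < j),
            ((z i - z j : ℝ) : ℂ) ^ (-(β i + β j) * ℏ / 2)) • f z) z (Pi.single k 1)
          = (-(ℏ / 2)) • ∑ j ∈ Finset.univ.erase k, ((z k - z j : ℝ) : ℂ)⁻¹ •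
              κ k j ((∏ i : Fin r, ∏ j ∈ Finset.univ.filter (fun j => i < j),
                ((z i - z j : ℝ) : ℂ) ^ (-(β i + β j) * ℏ / 2)) • f z))) by
    constructor
    · intro h z hz k; exact (key z hz k).mp (h z hz k)
    · intro h z hz k; exact (key z hz k).mpr (h z hz k)
  intro z hz k
  have hzU : ∀ i j : Fin r, i < j → z j < z i := by
    rw [hU] at hz; exact hz
  -- the scalar factor at z and its derivative
  obtain ⟨Φ', hΦd, hΦval⟩ :=
    Phi_deriv (fun i j => -(β i + β j) * ℏ / 2) (fun i j => by ring) z hzU k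
  have hΦ0 := Phi_ne_zero (fun i j => -(β i + β j) * ℏ / 2) z hzU
  have hfd : HasFDerivAt f (fderiv ℝ f z) z := (hfdiff z hz).hasFDerivAt
  have hgd : HasFDerivAt (fun z => (∏ i : Fin r, ∏ j ∈ Finset.univ.filter (fun j => i < j),
        ((z i - z j : ℝ) : ℂ) ^ (-(β i + β j) * ℏ / 2)) • f z)
      ((∏ i : Fin r, ∏ j ∈ Finset.univ.filter (fun j => i < j),
        ((z i - z j : ℝ) : ℂ) ^ (-(β i + β j) * ℏ / 2)) • fderiv ℝ f z
        + Φ'.smulRight (f z)) z := hΦd.smul hfd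
  rw [hgd.fderiv]
  set Φz : ℂ := ∏ i : Fin r, ∏ j ∈ Finset.univ.filter (fun j => i < j),
      ((z i - z j : ℝ) : ℂ) ^ (-(β i + β j) * ℏ / 2) with hΦzdef
  beta_reduce at hΦval
  have happ : ((Φz • fderiv ℝ f z + Φ'.smulRight (f z)) (Pi.single k 1))
      = Φz • fderiv ℝ f z (Pi.single k 1) + Φ' (Pi.single k 1) • f z := by
    simp
  rw [happ, hΦval]
  have hκop : ∀ j ∈ Finset.univ.erase k, κ k j (f z)
      = β k • f z + β j • f z - (Ω k j (f z) + Ω k j (f z)) := by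
    intro j hj
    have hkj : k ≠ j := ((Finset.mem_erase.1 hj).1).symm
    have hop : κ k j + 2 * Ω k j = H k + H j := by
      rw [hκ, hΩ, hH, hH]
      exact kappa_key x d hxx hdd hxd k j hkj
    have hsub : κ k j = H k + H j - 2 * Ω k j := eq_sub_of_add_eq hop
    rw [hsub]
    have h2 : (2 * Ω k j) (f z) = Ω k j (f z) + Ω k j (f z) := by
      rw [two_mul]; simp
    simp only [LinearMap.sub_apply, LinearMap.add_apply, h2, hfwt z hz k, hfwt z hz j]
  have hRHS : (-(ℏ/2)) • (∑ j ∈ Finset.univ.erase k,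
        ((z k - z j : ℝ) : ℂ)⁻¹ • κ k j (Φz • f z))
      = (Φz * ∑ j ∈ Finset.univ.erase k,
            (-(β k + β j) * ℏ / 2) * ((z k - z j : ℝ) : ℂ)⁻¹) • f z
        + Φz • (ℏ • ∑ j ∈ Finset.univ.erase k,
            ((z k - z j : ℝ) : ℂ)⁻¹ • Ω k j (f z)) := by
    have hterm : ∀ j ∈ Finset.univ.erase k,
        (-(ℏ/2)) • (((z k - z j : ℝ) : ℂ)⁻¹ • κ k j (Φz • f z))
        = ((-(β k + β j) * ℏ / 2) * ((z k - z j : ℝ) : ℂ)⁻¹ * Φz) • f z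
          + Φz • (ℏ • (((z k - z j : ℝ) : ℂ)⁻¹ • Ω k j (f z))) := by
      intro j hj
      rw [map_smul, hκop j hj]
      module
    rw [Finset.smul_sum, Finset.sum_congr rfl hterm, Finset.sum_add_distrib,
      ← Finset.sum_smul, ← Finset.smul_sum, ← Finset.smul_sum]
    congr 1
    rw [Finset.mul_sum]
    refine congrArg (· • f z) ?_
    exact Finset.sum_congr rfl fun j _ => by ring
  rw [hRHS]
  constructor
  · intro h
    rw [h]
    exact add_comm _ _
  · intro h
    have h2 : Φz • fderiv ℝ f z (Pi.single k 1)
        = Φz • (ℏ • ∑ j ∈ Finset.univ.erase k,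
            ((z k - z j : ℝ) : ℂ)⁻¹ • Ω k j (f z)) := by
      have h' : Φz • fderiv ℝ f z (Pi.single k 1)
            + (Φz * ∑ j ∈ Finset.univ.erase k,
                (-(β k + β j) * ℏ / 2) * ((z k - z j : ℝ) : ℂ)⁻¹) • f z
          = Φz • (ℏ • ∑ j ∈ Finset.univ.erase k,
              ((z k - z j : ℝ) : ℂ)⁻¹ • Ω k j (f z))
            + (Φz * ∑ j ∈ Finset.univ.erase k,
                (-(β k + β j) * ℏ / 2) * ((z k - z j : ℝ) : ℂ)⁻¹) • f z := by
        rw [h]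
        exact add_comm _ _
      exact add_right_cancel h'
    exact smul_right_injective E hΦ0 h2
end

section
/- (Theorem 3.3, second part) Let g : U → E be a differentiable function such that H_i(g(z)) = β_i·g(z) for all z ∈ U and all 1 ≤ i ≤ r. Then g satisfies ∂g/∂z_k = −(ℏ/2)·Σ_{j ≠ k} (z_k − z_j)^{−1}·κ_{kj}(g) for all k, if and only if the function u(z) := (Π_{1 ≤ i < j ≤ r} (z_i − z_j)^{ℏ(β_i−β_j)/2})·g(z) satisfies the dynamical system ∂u/∂z_k = −ℏ·Σ_{j ≠ k} (z_k − z_j)^{−1}·D̂_{kj}(u) for all k, where D̂_{kj} := D_{kj} if k < j and D̂_{kj} := D_{jk} if j < k. -/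
section AlgAux

variable {E : Type*} [AddCommGroup E] [Module ℂ E] {t r : ℕ}
variable (x d : Fin t → Fin r → Module.End ℂ E)

lemma aux_FF
    (hxd : ∀ a i b j, x a i * d b j + d b j * x a i = if a = b ∧ i = j then 1 else 0)
    (i j : Fin r) :
    (∑ a, x a i * d a j) * (∑ b, x b j * d b i)
      = (∑ a, x a i * d a i) - ∑ a, ∑ b, x a i * (x b j * (d a j * d b i)) := by
  rw [Finset.sum_mul_sum, ← Finset.sum_sub_distrib]
  refine Finset.sum_congr rfl fun a _ => ?_
  have key : ∀ b, (x a i * d a j) * (x b j * d b i)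
      = (if b = a then x a i * d b i else 0) - x a i * (x b j * (d a j * d b i)) := by
    intro b
    have h2 : d a j * x b j = (if b = a ∧ j = j then (1 : Module.End ℂ E) else 0)
        - x b j * d a j := eq_sub_of_add_eq' (hxd b j a j)
    have h3 : (x a i * d a j) * (x b j * d b i) = x a i * ((d a j * x b j) * d b i) := by
      noncomm_ring
    rw [h3, h2]
    simp only [and_true]
    split_ifs with h
    · noncomm_ring
    · noncomm_ring
  rw [Finset.sum_congr rfl (fun b _ => key b), Finset.sum_sub_distrib,
    Finset.sum_ite_eq' Finset.univ a (fun b => x a i * d b i)]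
  simp

lemma aux_Qsymm
    (hxx : ∀ a i b j, x a i * x b j + x b j * x a i = 0)
    (hdd : ∀ a i b j, d a i * d b j + d b j * d a i = 0)
    (i j : Fin r) :
    (∑ a, ∑ b, x a j * (x b i * (d a i * d b j)))
      = ∑ a, ∑ b, x a i * (x b j * (d a j * d b i)) := by
  rw [Finset.sum_comm]
  refine Finset.sum_congr rfl fun a _ => Finset.sum_congr rfl fun b _ => ?_
  have hx : x b j * x a i = -(x a i * x b j) := eq_neg_of_add_eq_zero_right (hxx a i b j)
  have hd : d b i * d a j = -(d a j * d b i) := eq_neg_of_add_eq_zero_right (hdd a j b i)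
  calc x b j * (x a i * (d b i * d a j)) = (x b j * x a i) * (d b i * d a j) := by noncomm_ring
    _ = (-(x a i * x b j)) * (-(d a j * d b i)) := by rw [hx, hd]
    _ = x a i * (x b j * (d a j * d b i)) := by noncomm_ring

lemma aux_comm
    (hxx : ∀ a i b j, x a i * x b j + x b j * x a i = 0)
    (hdd : ∀ a i b j, d a i * d b j + d b j * d a i = 0)
    (hxd : ∀ a i b j, x a i * d b j + d b j * x a i = if a = b ∧ i = j then 1 else 0)
    (i j : Fin r) :
    (∑ a, x a i * d a j) * (∑ b, x b j * d b i)
      = (∑ a, x a j * d a i) * (∑ b, x b i * d b j)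
        + ((∑ a, x a i * d a i) - (∑ a, x a j * d a j)) := by
  rw [aux_FF x d hxd i j, aux_FF x d hxd j i, aux_Qsymm x d hxx hdd i j]
  abel

lemma aux_kappa (i j : Fin r) :
    (∑ a : Fin t, ∑ b : Fin t,
      (x a i * d a j * x b j * d b i + x b j * d b i * x a i * d a j))
      = (∑ a, x a i * d a j) * (∑ b, x b j * d b i)
        + (∑ a, x a j * d a i) * (∑ b, x b i * d b j) := by
  have split : (∑ a : Fin t, ∑ b : Fin t,
      (x a i * d a j * x b j * d b i + x b j * d b i * x a i * d a j))
      = (∑ a : Fin t, ∑ b : Fin t, x a i * d a j * x b j * d b i)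
        + (∑ a : Fin t, ∑ b : Fin t, x b j * d b i * x a i * d a j) := by
    rw [← Finset.sum_add_distrib]
    exact Finset.sum_congr rfl fun a _ => Finset.sum_add_distrib
  have e1 : (∑ a, x a i * d a j) * (∑ b, x b j * d b i)
      = ∑ a : Fin t, ∑ b : Fin t, x a i * d a j * x b j * d b i := by
    rw [Finset.sum_mul_sum]
    exact Finset.sum_congr rfl fun a _ => Finset.sum_congr rfl fun b _ => by noncomm_ring
  have e2 : (∑ a, x a j * d a i) * (∑ b, x b i * d b j)
      = ∑ a : Fin t, ∑ b : Fin t, x b j * d b i * x a i * d a j := by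
    rw [Finset.sum_mul_sum]
    rw [Finset.sum_comm (s := (Finset.univ : Finset (Fin t))) (t := Finset.univ)
      (f := fun a b => x b j * d b i * x a i * d a j)]
    exact Finset.sum_congr rfl fun a _ => Finset.sum_congr rfl fun b _ => by noncomm_ring
  rw [split, e1, e2]

end AlgAux

lemma aux_sum {r : ℕ} (z : Fin r → ℝ) (c : Fin r → Fin r → ℂ) (k : Fin r) :
    (∑ p ∈ Finset.univ.filter (fun p : Fin r × Fin r => p.1 < p.2),
      c p.1 p.2 * ((z p.1 - z p.2 : ℝ) : ℂ)⁻¹ *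
        ((if p.1 = k then (1 : ℂ) else 0) - (if p.2 = k then (1 : ℂ) else 0)))
    = ∑ j ∈ Finset.univ.erase k,
        (if k < j then c k j else c j k) * ((z k - z j : ℝ) : ℂ)⁻¹ := by
  classical
  set A : Fin r → Fin r → ℂ :=
    fun i j => if i < j then c i j * ((z i - z j : ℝ) : ℂ)⁻¹ else 0 with hA
  have step1 : ∀ i j : Fin r,
      (if i < j then c i j * ((z i - z j : ℝ) : ℂ)⁻¹ *
        ((if i = k then (1 : ℂ) else 0) - (if j = k then (1 : ℂ) else 0)) else 0)
      = (if i = k then A i j else 0) - (if j = k then A i j else 0) := by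
    intro i j
    by_cases h1 : i < j <;> by_cases h2 : i = k <;> by_cases h3 : j = k <;>
      simp [hA, h1, h2, h3] <;> split_ifs <;> ring
  have lhs_eq : (∑ p ∈ Finset.univ.filter (fun p : Fin r × Fin r => p.1 < p.2),
      c p.1 p.2 * ((z p.1 - z p.2 : ℝ) : ℂ)⁻¹ *
        ((if p.1 = k then (1 : ℂ) else 0) - (if p.2 = k then (1 : ℂ) else 0)))
      = (∑ j : Fin r, A k j) - (∑ i : Fin r, A i k) := by
    rw [Finset.sum_filter, Fintype.sum_prod_type]
    have : ∀ i : Fin r, (∑ j : Fin r,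
        (if i < j then c i j * ((z i - z j : ℝ) : ℂ)⁻¹ *
          ((if i = k then (1 : ℂ) else 0) - (if j = k then (1 : ℂ) else 0)) else 0))
        = (if i = k then (∑ j : Fin r, A i j) else 0) - A i k := by
      intro i
      rw [Finset.sum_congr rfl (fun j _ => step1 i j), Finset.sum_sub_distrib]
      congr 1
      · split_ifs with h
        · rfl
        · simp
      · exact (Finset.sum_ite_eq' Finset.univ k (fun j => A i j)).trans (if_pos (Finset.mem_univ k))
    rw [Finset.sum_congr rfl (fun i _ => this i), Finset.sum_sub_distrib,
      Finset.sum_ite_eq' Finset.univ k (fun i => ∑ j : Fin r, A i j)]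
    simp
  rw [lhs_eq]
  rw [show (∑ j ∈ Finset.univ.erase k,
      (if k < j then c k j else c j k) * ((z k - z j : ℝ) : ℂ)⁻¹)
    = ∑ j : Fin r, (if k < j then c k j else c j k) * ((z k - z j : ℝ) : ℂ)⁻¹
    from Finset.sum_erase _ (by simp)]
  rw [← Finset.sum_sub_distrib]
  refine Finset.sum_congr rfl fun j _ => ?_
  rcases lt_trichotomy j k with h | h | h
  · have hkj : ¬ k < j := not_lt.mpr h.le
    have hneg : ((z j - z k : ℝ) : ℂ) = -((z k - z j : ℝ) : ℂ) := by push_cast; ring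
    simp only [hA, hkj, if_neg hkj, h, if_pos h, if_neg (lt_asymm h)]
    rw [hneg, inv_neg]
    simp only [if_false]
    ring
  · subst h
    simp [hA]
  · have hjk : ¬ j < k := not_lt.mpr h.le
    simp [hA, h, hjk]

open ContinuousLinearMap in
lemma aux_phi {r : ℕ} (c : Fin r → Fin r → ℂ) (z : Fin r → ℝ)
    (hz : ∀ i j : Fin r, i < j → z j < z i) :
    ∃ D : (Fin r → ℝ) →L[ℝ] ℂ,
      HasFDerivAt (fun w : Fin r → ℝ => ∏ p ∈ Finset.univ.filter
          (fun p : Fin r × Fin r => p.1 < p.2),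
          ((w p.1 - w p.2 : ℝ) : ℂ) ^ c p.1 p.2) D z ∧
      ∀ k : Fin r, D (Pi.single k 1)
        = (∏ p ∈ Finset.univ.filter (fun p : Fin r × Fin r => p.1 < p.2),
            ((z p.1 - z p.2 : ℝ) : ℂ) ^ c p.1 p.2)
          * ∑ j ∈ Finset.univ.erase k,
              (if k < j then c k j else c j k) * ((z k - z j : ℝ) : ℂ)⁻¹ := by
  classical
  set P : Finset (Fin r × Fin r) := Finset.univ.filter (fun p => p.1 < p.2) with hP
  have hpos : ∀ p ∈ P, (0 : ℝ) < z p.1 - z p.2 := by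
    intro p hp
    have := (Finset.mem_filter.mp hp).2
    exact sub_pos.mpr (hz _ _ this)
  set L : (Fin r × Fin r) → ((Fin r → ℝ) →L[ℝ] ℂ) := fun p =>
    (Complex.ofRealCLM : ℝ →L[ℝ] ℂ).comp
      ((ContinuousLinearMap.proj p.1 : (Fin r → ℝ) →L[ℝ] ℝ) - ContinuousLinearMap.proj p.2)
    with hL
  have hLf : ∀ p : Fin r × Fin r,
      HasFDerivAt (fun w : Fin r → ℝ => ((w p.1 - w p.2 : ℝ) : ℂ)) (L p) z := by
    intro p
    have h1 : (fun w : Fin r → ℝ => ((w p.1 - w p.2 : ℝ) : ℂ)) = ⇑(L p) := by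
      ext w
      simp [hL]
    rw [h1]
    exact (L p).hasFDerivAt
  have hfp : ∀ p ∈ P, HasFDerivAt
      (fun w : Fin r → ℝ => ((w p.1 - w p.2 : ℝ) : ℂ) ^ c p.1 p.2)
      ((c p.1 p.2 * ((z p.1 - z p.2 : ℝ) : ℂ) ^ (c p.1 p.2 - 1)) • L p) z := by
    intro p hp
    have h0 : ((z p.1 - z p.2 : ℝ) : ℂ) ∈ Complex.slitPlane :=
      Complex.ofReal_mem_slitPlane.mpr (hpos p hp)
    have hc : HasDerivAt (fun w : ℂ => w ^ c p.1 p.2)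
        (c p.1 p.2 * ((z p.1 - z p.2 : ℝ) : ℂ) ^ (c p.1 p.2 - 1))
        ((z p.1 - z p.2 : ℝ) : ℂ) :=
      (Complex.hasStrictDerivAt_cpow_const h0).hasDerivAt
    have := hc.comp_hasFDerivAt z (hLf p)
    simpa [Function.comp_def] using this
  have hD := HasFDerivAt.finset_prod (fun p hp => hfp p hp)
  refine ⟨_, hD, ?_⟩
  intro k
  rw [ContinuousLinearMap.sum_apply]
  have hterm : ∀ p ∈ P,
      ((∏ q ∈ P.erase p, ((z q.1 - z q.2 : ℝ) : ℂ) ^ c q.1 q.2) •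
        ((c p.1 p.2 * ((z p.1 - z p.2 : ℝ) : ℂ) ^ (c p.1 p.2 - 1)) • L p)) (Pi.single k 1)
      = (∏ p ∈ P, ((z p.1 - z p.2 : ℝ) : ℂ) ^ c p.1 p.2)
        * (c p.1 p.2 * ((z p.1 - z p.2 : ℝ) : ℂ)⁻¹ *
            ((if p.1 = k then (1 : ℂ) else 0) - (if p.2 = k then (1 : ℂ) else 0))) := by
    intro p hp
    have hw : ((z p.1 - z p.2 : ℝ) : ℂ) ≠ 0 := by
      exact_mod_cast (hpos p hp).ne'
    have hLval : L p (Pi.single k 1)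
        = ((if p.1 = k then (1 : ℂ) else 0) - (if p.2 = k then (1 : ℂ) else 0)) := by
      simp [hL, Pi.single_apply, apply_ite (fun t : ℝ => (t : ℂ))]
    rw [ContinuousLinearMap.smul_apply, ContinuousLinearMap.smul_apply, hLval]
    rw [Complex.cpow_sub _ _ hw, Complex.cpow_one]
    rw [← Finset.prod_erase_mul P _ hp]
    simp only [smul_eq_mul]
    ring
  rw [Finset.sum_congr rfl hterm, ← Finset.mul_sum]
  congr 1
  exact aux_sum z c k

/-- **Theorem 3.3, second part.**  Under the CAR setup, a differentiable function
`g : U → E` in the `β`-weight space satisfies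
`∂g/∂z_k = -(ℏ/2) Σ_{j≠k} (z_k - z_j)⁻¹ κ_{kj} g` iff
`u(z) = (Π_{i<j} (z_i - z_j)^{ℏ(β_i-β_j)/2}) g(z)` satisfies the dynamical system
`∂u/∂z_k = -ℏ Σ_{j≠k} (z_k - z_j)⁻¹ D̂_{kj} u`, where `D̂_{kj} = D_{kj}` if `k < j`
and `D̂_{kj} = D_{jk}` otherwise, with `D_{ij} = F_{ji} ∘ F_{ij}` for `i < j`. -/
theorem theorem3_3_second (t r : ℕ) (ht : 0 < t) (hr : 0 < r)
    (E : Type*) [NormedAddCommGroup E] [NormedSpace ℂ E]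
    (x d : Fin t → Fin r → Module.End ℂ E)
    (hxx : ∀ a i b j, x a i * x b j + x b j * x a i = 0)
    (hdd : ∀ a i b j, d a i * d b j + d b j * d a i = 0)
    (hxd : ∀ a i b j, x a i * d b j + d b j * x a i =
      if a = b ∧ i = j then 1 else 0)
    (κ : Fin r → Fin r → Module.End ℂ E)
    (hκ : ∀ i j, κ i j = ∑ a : Fin t, ∑ b : Fin t,
      (x a i * d a j * x b j * d b i + x b j * d b i * x a i * d a j))
    (H : Fin r → Module.End ℂ E)
    (hH : ∀ i, H i = ∑ a : Fin t, x a i * d a i)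
    (F : Fin r → Fin r → Module.End ℂ E)
    (hF : ∀ i j, F i j = ∑ a : Fin t, x a i * d a j)
    (Dhat : Fin r → Fin r → Module.End ℂ E)
    (hDhat : ∀ k j, Dhat k j = if k < j then F j k * F k j else F k j * F j k)
    (ℏ : ℂ) (β : Fin r → ℂ)
    (U : Set (Fin r → ℝ)) (hU : U = {z | ∀ i j : Fin r, i < j → z j < z i})
    (g : (Fin r → ℝ) → E)
    (hgdiff : ∀ z ∈ U, DifferentiableAt ℝ g z)
    (hgwt : ∀ z ∈ U, ∀ i, H i (g z) = β i • g z)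
    (u : (Fin r → ℝ) → E)
    (hu : ∀ z, u z =
      (∏ i : Fin r, ∏ j ∈ Finset.univ.filter (fun j => i < j),
        ((z i - z j : ℝ) : ℂ) ^ (ℏ * (β i - β j) / 2)) • g z) :
    (∀ z ∈ U, ∀ k : Fin r, fderiv ℝ g z (Pi.single k 1)
        = (-(ℏ / 2)) • ∑ j ∈ Finset.univ.erase k,
            ((z k - z j : ℝ) : ℂ)⁻¹ • κ k j (g z))
    ↔ (∀ z ∈ U, ∀ k : Fin r, fderiv ℝ u z (Pi.single k 1)
        = (-ℏ) • ∑ j ∈ Finset.univ.erase k,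
            ((z k - z j : ℝ) : ℂ)⁻¹ • Dhat k j (u z)) := by
  classical
  set c : Fin r → Fin r → ℂ := fun i j => ℏ * (β i - β j) / 2 with hc
  set P : Finset (Fin r × Fin r) :=
    Finset.univ.filter (fun p : Fin r × Fin r => p.1 < p.2) with hP
  -- rewrite the double product as a product over pairs
  have hprod : ∀ w : Fin r → ℝ,
      (∏ i : Fin r, ∏ j ∈ Finset.univ.filter (fun j => i < j),
        ((w i - w j : ℝ) : ℂ) ^ (ℏ * (β i - β j) / 2))
      = ∏ p ∈ P, ((w p.1 - w p.2 : ℝ) : ℂ) ^ c p.1 p.2 := by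
    intro w
    rw [hP]
    simp only [hc, Finset.prod_filter, Fintype.prod_prod_type]
  have hu' : u = fun w => (∏ p ∈ P, ((w p.1 - w p.2 : ℝ) : ℂ) ^ c p.1 p.2) • g w := by
    funext w
    rw [hu w, hprod w]
  -- the key pointwise equivalence
  have key : ∀ z ∈ U, ∀ k : Fin r,
      (fderiv ℝ g z (Pi.single k 1)
        = (-(ℏ / 2)) • ∑ j ∈ Finset.univ.erase k,
            ((z k - z j : ℝ) : ℂ)⁻¹ • κ k j (g z))
      ↔ (fderiv ℝ u z (Pi.single k 1)
        = (-ℏ) • ∑ j ∈ Finset.univ.erase k,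
            ((z k - z j : ℝ) : ℂ)⁻¹ • Dhat k j (u z)) := by
    intro z hzU k
    have hz : ∀ i j : Fin r, i < j → z j < z i := by
      have := hzU; rw [hU] at this; exact this
    obtain ⟨D, hD, hDval⟩ := aux_phi c z hz
    set φz : ℂ := ∏ p ∈ P, ((z p.1 - z p.2 : ℝ) : ℂ) ^ c p.1 p.2 with hφz
    have hφ0 : φz ≠ 0 := by
      rw [hφz]
      rw [Finset.prod_ne_zero_iff]
      intro p hp
      have hw : ((z p.1 - z p.2 : ℝ) : ℂ) ≠ 0 := by
        have : (0 : ℝ) < z p.1 - z p.2 :=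
          sub_pos.mpr (hz _ _ (Finset.mem_filter.mp hp).2)
        exact_mod_cast this.ne'
      rw [Complex.cpow_def_of_ne_zero hw]
      exact Complex.exp_ne_zero _
    set S : ℂ := ∑ j ∈ Finset.univ.erase k,
      (if k < j then c k j else c j k) * ((z k - z j : ℝ) : ℂ)⁻¹ with hS
    -- derivative of u
    have hg' : HasFDerivAt g (fderiv ℝ g z) z := (hgdiff z hzU).hasFDerivAt
    have huF : HasFDerivAt u
        (φz • fderiv ℝ g z + D.smulRight (g z)) z := by
      rw [hu']
      exact hD.smul hg'
    have hUeval : fderiv ℝ u z (Pi.single k 1)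
        = φz • (fderiv ℝ g z (Pi.single k 1) + S • g z) := by
      rw [huF.fderiv]
      rw [ContinuousLinearMap.add_apply, ContinuousLinearMap.smul_apply,
        ContinuousLinearMap.smulRight_apply, hDval k]
      rw [hS, mul_smul, smul_add]
    -- weight rewriting of κ
    have hκval : ∀ j ∈ Finset.univ.erase k,
        κ k j (g z) = Dhat k j (g z) + Dhat k j (g z)
          + (if k < j then β k - β j else β j - β k) • g z := by
      intro j hj
      have hjk : j ≠ k := Finset.ne_of_mem_erase hj
      have hkap : κ k j = (∑ a, x a k * d a j) * (∑ b, x b j * d b k)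
          + (∑ a, x a j * d a k) * (∑ b, x b k * d b j) := by
        rw [hκ]
        exact aux_kappa x d k j
      by_cases hkj : k < j
      · have hcomm := aux_comm x d hxx hdd hxd k j
        have hend : κ k j = ((∑ a, x a j * d a k) * (∑ b, x b k * d b j))
            + ((∑ a, x a j * d a k) * (∑ b, x b k * d b j))
            + ((∑ a : Fin t, x a k * d a k) - (∑ a : Fin t, x a j * d a j)) := by
          rw [hkap, hcomm]; abel
        rw [hDhat k j, if_pos hkj, if_pos hkj, hF, hF, hend]
        rw [LinearMap.add_apply, LinearMap.add_apply, LinearMap.sub_apply]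
        have hk' := hgwt z hzU k
        have hj' := hgwt z hzU j
        rw [hH] at hk' hj'
        rw [hk', hj', sub_smul]
      · have hjk' : j < k := lt_of_le_of_ne (not_lt.mp hkj) hjk
        have hcomm := aux_comm x d hxx hdd hxd j k
        have hend : κ k j = ((∑ a, x a k * d a j) * (∑ b, x b j * d b k))
            + ((∑ a, x a k * d a j) * (∑ b, x b j * d b k))
            + ((∑ a : Fin t, x a j * d a j) - (∑ a : Fin t, x a k * d a k)) := by
          rw [hkap, hcomm]; abel
        rw [hDhat k j, if_neg hkj, if_neg hkj, hF, hF, hend]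
        rw [LinearMap.add_apply, LinearMap.add_apply, LinearMap.sub_apply]
        have hk' := hgwt z hzU k
        have hj' := hgwt z hzU j
        rw [hH] at hk' hj'
        rw [hk', hj', sub_smul]
    -- RHS for u in terms of g
    have hRHSu : ((-ℏ) • ∑ j ∈ Finset.univ.erase k,
          ((z k - z j : ℝ) : ℂ)⁻¹ • Dhat k j (u z))
        = φz • ((-ℏ) • ∑ j ∈ Finset.univ.erase k,
            ((z k - z j : ℝ) : ℂ)⁻¹ • Dhat k j (g z)) := by
      have huz : u z = φz • g z := by rw [hu', hφz]
      have : ∀ j ∈ Finset.univ.erase k,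
          ((z k - z j : ℝ) : ℂ)⁻¹ • Dhat k j (u z)
          = φz • (((z k - z j : ℝ) : ℂ)⁻¹ • Dhat k j (g z)) := by
        intro j _
        rw [huz, map_smul, smul_comm]
      rw [Finset.sum_congr rfl this, ← Finset.smul_sum, smul_comm]
    -- RHS for g, rewritten
    have hRHSg : ((-(ℏ / 2)) • ∑ j ∈ Finset.univ.erase k,
          ((z k - z j : ℝ) : ℂ)⁻¹ • κ k j (g z))
        = ((-ℏ) • ∑ j ∈ Finset.univ.erase k,
            ((z k - z j : ℝ) : ℂ)⁻¹ • Dhat k j (g z)) - S • g z := by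
      rw [Finset.sum_congr rfl (fun j hj => by rw [hκval j hj])]
      have expand : ∀ j ∈ Finset.univ.erase k,
          ((z k - z j : ℝ) : ℂ)⁻¹ • (Dhat k j (g z) + Dhat k j (g z)
            + (if k < j then β k - β j else β j - β k) • g z)
          = ((z k - z j : ℝ) : ℂ)⁻¹ • Dhat k j (g z)
            + ((z k - z j : ℝ) : ℂ)⁻¹ • Dhat k j (g z)
            + (((z k - z j : ℝ) : ℂ)⁻¹ * (if k < j then β k - β j else β j - β k)) • g z := by
        intro j _
        rw [smul_add, smul_add, smul_smul]
      rw [Finset.sum_congr rfl expand]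
      rw [Finset.sum_add_distrib, Finset.sum_add_distrib, ← Finset.sum_smul]
      set T : E := ∑ j ∈ Finset.univ.erase k,
        ((z k - z j : ℝ) : ℂ)⁻¹ • Dhat k j (g z) with hT
      set s0 : ℂ := ∑ j ∈ Finset.univ.erase k,
        ((z k - z j : ℝ) : ℂ)⁻¹ * (if k < j then β k - β j else β j - β k) with hs0
      have hSs0 : S = (ℏ / 2) * s0 := by
        rw [hS, hs0, Finset.mul_sum]
        refine Finset.sum_congr rfl fun j _ => ?_
        rw [hc]
        split_ifs <;> ring
      rw [hSs0]
      module
    -- put everything together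
    rw [hUeval, hRHSu, hRHSg]
    constructor
    · intro h
      rw [h]
      congr 1
      abel
    · intro h
      have h2 := smul_right_injective E hφ0 h
      rw [eq_sub_iff_add_eq]
      exact h2
  constructor
  · intro h z hzU k
    exact (key z hzU k).mp (h z hzU k)
  · intro h z hzU k
    exact (key z hzU k).mpr (h z hzU k)
end

section
/- (Theorem 3.5, concrete form of the KZ–dynamical correspondence) Let f : U → E be a differentiable function such that H_i(f(z)) = β_i·f(z) for all z ∈ U and all 1 ≤ i ≤ r. Then f satisfies the Knizhnik–Zamolodchikov system ∂f/∂z_k = ℏ·Σ_{j ≠ k} (z_k − z_j)^{−1}·Ω_{kj}(f) for all k, if and only if the function u(z) := (Π_{1 ≤ i < j ≤ r} (z_i − z_j)^{−β_j·ℏ})·f(z) satisfies the dynamical system ∂u/∂z_k = −ℏ·Σ_{j ≠ k} (z_k − z_j)^{−1}·D̂_{kj}(u) for all k, where D̂_{kj} := D_{kj} if k < j and D̂_{kj} := D_{jk} if j < k. -/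
open Finset


lemma car_identities {E : Type*} [AddCommGroup E] [Module ℂ E] {t r : ℕ}
    (x d : Fin t → Fin r → Module.End ℂ E)
    (hxx : ∀ a i b j, x a i * x b j + x b j * x a i = 0)
    (hdd : ∀ a i b j, d a i * d b j + d b j * d a i = 0)
    (hxd : ∀ a i b j, x a i * d b j + d b j * x a i = if a = b ∧ i = j then 1 else 0)
    (k j : Fin r) (hkj : k ≠ j) :
    (∑ a : Fin t, ∑ b : Fin t, x a k * d b k * x b j * d a j)
      = (∑ a : Fin t, x a j * d a j) - (∑ a : Fin t, x a j * d a k) * (∑ a : Fin t, x a k * d a j)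
    ∧ (∑ a : Fin t, ∑ b : Fin t, x a k * d b k * x b j * d a j)
      = (∑ a : Fin t, x a k * d a k) - (∑ a : Fin t, x a k * d a j) * (∑ a : Fin t, x a j * d a k) := by
  set T : Module.End ℂ E := ∑ a : Fin t, ∑ b : Fin t, x a k * (x b j * (d a j * d b k)) with hT
  have hΩT : (∑ a : Fin t, ∑ b : Fin t, x a k * d b k * x b j * d a j) = T := by
    refine Finset.sum_congr rfl fun a _ => Finset.sum_congr rfl fun b _ => ?_
    have h1 : d b k * x b j = -(x b j * d b k) := by
      have h := hxd b j b k
      rw [if_neg (by simp [hkj.symm])] at h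
      exact eq_neg_of_add_eq_zero_right h
    have h2 : d b k * d a j = -(d a j * d b k) :=
      eq_neg_of_add_eq_zero_right (hdd a j b k)
    calc x a k * d b k * x b j * d a j
        = x a k * ((d b k * x b j) * d a j) := by simp only [mul_assoc]
      _ = x a k * (x b j * (d a j * d b k)) := by
          rw [h1]; simp only [neg_mul, mul_assoc]; rw [h2]; simp only [mul_neg, neg_neg]
  have hF1 : (∑ a : Fin t, x a j * d a k) * (∑ a : Fin t, x a k * d a j)
      = (∑ a : Fin t, x a j * d a j) - T := by
    rw [Finset.sum_mul_sum]
    have expand : ∀ a b : Fin t, (x a j * d a k) * (x b k * d b j)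
        = (if b = a then x a j * d b j else 0) - x a j * (x b k * (d a k * d b j)) := by
      intro a b
      have h := hxd b k a k
      have h' : d a k * x b k = (if b = a then (1 : Module.End ℂ E) else 0) - x b k * d a k := by
        have := eq_sub_of_add_eq' h
        simpa using this
      calc (x a j * d a k) * (x b k * d b j)
          = x a j * ((d a k * x b k) * d b j) := by rw [mul_assoc, ← mul_assoc (d a k)]
        _ = _ := by
            rw [h', sub_mul, mul_sub, ite_mul, one_mul, zero_mul, mul_ite, mul_zero]
            simp only [mul_assoc]
    calc ∑ a : Fin t, ∑ b : Fin t, (x a j * d a k) * (x b k * d b j)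
        = ∑ a : Fin t, ∑ b : Fin t,
            ((if b = a then x a j * d b j else 0) - x a j * (x b k * (d a k * d b j))) := by
          exact Finset.sum_congr rfl fun a _ => Finset.sum_congr rfl fun b _ => expand a b
      _ = (∑ a : Fin t, x a j * d a j)
            - ∑ a : Fin t, ∑ b : Fin t, x a j * (x b k * (d a k * d b j)) := by
          simp only [Finset.sum_sub_distrib]
          congr 1
          simp
      _ = (∑ a : Fin t, x a j * d a j) - T := by
          congr 1
          have swap : ∀ a b : Fin t, x a j * (x b k * (d a k * d b j))
              = x b k * (x a j * (d b j * d a k)) := by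
            intro a b
            have h3 : x a j * x b k = -(x b k * x a j) :=
              eq_neg_of_add_eq_zero_right (hxx b k a j)
            have h4 : d a k * d b j = -(d b j * d a k) :=
              eq_neg_of_add_eq_zero_right (hdd b j a k)
            rw [← mul_assoc, h3, h4, neg_mul, mul_neg, neg_neg, mul_assoc]
          rw [Finset.sum_congr rfl fun a _ => Finset.sum_congr rfl fun b _ => swap a b]
          exact Finset.sum_comm
  have hF2 : (∑ a : Fin t, x a k * d a j) * (∑ a : Fin t, x a j * d a k)
      = (∑ a : Fin t, x a k * d a k) - T := by
    rw [Finset.sum_mul_sum]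
    have expand : ∀ a b : Fin t, (x a k * d a j) * (x b j * d b k)
        = (if b = a then x a k * d b k else 0) - x a k * (x b j * (d a j * d b k)) := by
      intro a b
      have h := hxd b j a j
      have h' : d a j * x b j = (if b = a then (1 : Module.End ℂ E) else 0) - x b j * d a j := by
        have := eq_sub_of_add_eq' h
        simpa using this
      calc (x a k * d a j) * (x b j * d b k)
          = x a k * ((d a j * x b j) * d b k) := by rw [mul_assoc, ← mul_assoc (d a j)]
        _ = _ := by
            rw [h', sub_mul, mul_sub, ite_mul, one_mul, zero_mul, mul_ite, mul_zero]
            simp only [mul_assoc]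
    calc ∑ a : Fin t, ∑ b : Fin t, (x a k * d a j) * (x b j * d b k)
        = ∑ a : Fin t, ∑ b : Fin t,
            ((if b = a then x a k * d b k else 0) - x a k * (x b j * (d a j * d b k))) := by
          exact Finset.sum_congr rfl fun a _ => Finset.sum_congr rfl fun b _ => expand a b
      _ = (∑ a : Fin t, x a k * d a k) - T := by
          simp only [Finset.sum_sub_distrib]
          congr 1
          simp
  refine ⟨?_, ?_⟩
  · rw [hΩT, hF1]; abel
  · rw [hΩT, hF2]; abel


lemma prod_pairs {r : ℕ} (G : Fin r → Fin r → ℂ) :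
    ∏ p ∈ Finset.univ.filter (fun p : Fin r × Fin r => p.1 < p.2), G p.1 p.2
      = ∏ i : Fin r, ∏ j ∈ Finset.univ.filter (fun j => i < j), G i j := by
  rw [show (Finset.univ : Finset (Fin r × Fin r)) = Finset.univ ×ˢ Finset.univ from
    (Finset.univ_product_univ).symm]
  rw [Finset.prod_filter, Finset.prod_product]
  exact Finset.prod_congr rfl fun i _ => (Finset.prod_filter _ _).symm

lemma phi_deriv {r : ℕ} (β : Fin r → ℂ) (ℏ : ℂ) (z : Fin r → ℝ)
    (hz : ∀ i j : Fin r, i < j → z j < z i) :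
    ∃ Φ : (Fin r → ℝ) →L[ℝ] ℂ,
      HasFDerivAt (fun y : Fin r → ℝ =>
        ∏ p ∈ Finset.univ.filter (fun p : Fin r × Fin r => p.1 < p.2),
          ((y p.1 - y p.2 : ℝ) : ℂ) ^ (-(β p.2) * ℏ)) Φ z ∧
      ∀ k : Fin r, Φ (Pi.single k 1)
        = (∏ p ∈ Finset.univ.filter (fun p : Fin r × Fin r => p.1 < p.2),
            ((z p.1 - z p.2 : ℝ) : ℂ) ^ (-(β p.2) * ℏ)) *
          ∑ j ∈ Finset.univ.erase k,
            (-(ℏ * (if k < j then β j else β k))) * ((z k - z j : ℝ) : ℂ)⁻¹ := by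
  classical
  set S : Finset (Fin r × Fin r) := Finset.univ.filter (fun p : Fin r × Fin r => p.1 < p.2)
    with hSdef
  set ee : Fin r × Fin r → ℂ := fun p => -(β p.2) * ℏ with heedef
  set gg : (Fin r × Fin r) → (Fin r → ℝ) → ℂ :=
    fun p y => ((y p.1 - y p.2 : ℝ) : ℂ) ^ (ee p) with hggdef
  have hbpos : ∀ p ∈ S, (0 : ℝ) < z p.1 - z p.2 := by
    intro p hp
    have : p.1 < p.2 := by simpa [hSdef] using hp
    have := hz p.1 p.2 this
    linarith
  have hbne : ∀ p ∈ S, ((z p.1 - z p.2 : ℝ) : ℂ) ≠ 0 := by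
    intro p hp
    exact_mod_cast (hbpos p hp).ne'
  have hgne : ∀ p ∈ S, gg p z ≠ 0 := by
    intro p hp
    have hb := hbne p hp
    simp only [hggdef]
    rw [Ne, Complex.cpow_eq_zero_iff]
    push_cast at hb ⊢
    tauto
  -- derivative of each factor
  set L : (Fin r × Fin r) → (Fin r → ℝ) →L[ℝ] ℂ := fun p =>
    Complex.ofRealCLM.comp ((ContinuousLinearMap.proj p.1 : ((Fin r → ℝ)) →L[ℝ] ℝ)
      - ContinuousLinearMap.proj p.2) with hLdef
  have hLapp : ∀ p (y : Fin r → ℝ), L p y = ((y p.1 - y p.2 : ℝ) : ℂ) := by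
    intro p y; simp [hLdef]
  set G : (Fin r × Fin r) → (Fin r → ℝ) →L[ℝ] ℂ := fun p =>
    ((((1 : ℂ →L[ℂ] ℂ).smulRight
      (ee p * ((z p.1 - z p.2 : ℝ) : ℂ) ^ (ee p - 1))).restrictScalars ℝ).comp (L p))
    with hGdef
  have hder : ∀ p ∈ S, HasFDerivAt (gg p) (G p) z := by
    intro p hp
    have hslit : ((z p.1 - z p.2 : ℝ) : ℂ) ∈ Complex.slitPlane :=
      Complex.ofReal_mem_slitPlane.2 (hbpos p hp)
    have houter : HasFDerivAt (fun w : ℂ => w ^ (ee p))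
        ((1 : ℂ →L[ℂ] ℂ).smulRight (ee p * ((z p.1 - z p.2 : ℝ) : ℂ) ^ (ee p - 1)))
        (((z p.1 - z p.2 : ℝ) : ℂ)) :=
      (Complex.hasStrictDerivAt_cpow_const hslit).hasDerivAt.hasFDerivAt
    have hinner : HasFDerivAt (fun y : Fin r → ℝ => ((y p.1 - y p.2 : ℝ) : ℂ)) (L p) z := by
      have := (L p).hasFDerivAt (x := z)
      have he : (fun y : Fin r → ℝ => ((y p.1 - y p.2 : ℝ) : ℂ)) = ⇑(L p) :=
        funext fun y => (hLapp p y).symm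
      rw [he]
      exact this
    have := (houter.restrictScalars ℝ).comp z hinner
    have heq : ((fun w : ℂ => w ^ (ee p)) ∘ (fun y : Fin r → ℝ => ((y p.1 - y p.2 : ℝ) : ℂ)))
        = gg p := rfl
    rw [heq] at this
    exact this
  refine ⟨∑ p ∈ S, (∏ q ∈ S.erase p, gg q z) • G p, ?_, ?_⟩
  · exact HasFDerivAt.finset_prod hder
  intro k
  rw [ContinuousLinearMap.sum_apply]
  have hterm : ∀ p ∈ S, ((∏ q ∈ S.erase p, gg q z) • G p) (Pi.single k 1)
      = (∏ q ∈ S, gg q z) *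
        ((ee p * ((z p.1 - z p.2 : ℝ) : ℂ)⁻¹) *
          (((Pi.single k 1 : Fin r → ℝ) p.1 - (Pi.single k 1 : Fin r → ℝ) p.2 : ℝ) : ℂ)) := by
    intro p hp
    rw [ContinuousLinearMap.smul_apply]
    have hGapp : G p (Pi.single k 1)
        = (((Pi.single k 1 : Fin r → ℝ) p.1 - (Pi.single k 1 : Fin r → ℝ) p.2 : ℝ) : ℂ)
          * (ee p * ((z p.1 - z p.2 : ℝ) : ℂ) ^ (ee p - 1)) := by
      simp [hGdef, hLapp, ContinuousLinearMap.smulRight_apply, smul_eq_mul]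
    rw [hGapp]
    have hpow : ((z p.1 - z p.2 : ℝ) : ℂ) ^ (ee p - 1)
        = gg p z * ((z p.1 - z p.2 : ℝ) : ℂ)⁻¹ := by
      rw [Complex.cpow_sub _ _ (hbne p hp), Complex.cpow_one, div_eq_mul_inv]
    have hprod : (∏ q ∈ S.erase p, gg q z) * gg p z = ∏ q ∈ S, gg q z :=
      Finset.prod_erase_mul S _ hp
    rw [smul_eq_mul, hpow]
    calc (∏ q ∈ S.erase p, gg q z) *
          ((((Pi.single k 1 : Fin r → ℝ) p.1 - (Pi.single k 1 : Fin r → ℝ) p.2 : ℝ) : ℂ)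
            * (ee p * (gg p z * ((z p.1 - z p.2 : ℝ) : ℂ)⁻¹)))
        = ((∏ q ∈ S.erase p, gg q z) * gg p z) *
          ((ee p * ((z p.1 - z p.2 : ℝ) : ℂ)⁻¹) *
            (((Pi.single k 1 : Fin r → ℝ) p.1 - (Pi.single k 1 : Fin r → ℝ) p.2 : ℝ) : ℂ)) := by
          ring
      _ = _ := by rw [hprod]
  rw [Finset.sum_congr rfl hterm, ← Finset.mul_sum]
  congr 1
  -- now the pure sum identity
  have hzero : ∀ p ∈ S, p ∉ S.filter (fun p => p.1 = k ∨ p.2 = k) →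
      (ee p * ((z p.1 - z p.2 : ℝ) : ℂ)⁻¹) *
        (((Pi.single k 1 : Fin r → ℝ) p.1 - (Pi.single k 1 : Fin r → ℝ) p.2 : ℝ) : ℂ) = 0 := by
    intro p hp hnp
    have h1 : ¬(p.1 = k ∨ p.2 = k) := by
      intro h; exact hnp (Finset.mem_filter.2 ⟨hp, h⟩)
    push_neg at h1
    simp [Pi.single_apply, h1.1, h1.2]
  rw [← Finset.sum_filter_add_sum_filter_not S (fun p => p.1 = k ∨ p.2 = k)]
  have hz2 : ∑ p ∈ S.filter (fun p => ¬(p.1 = k ∨ p.2 = k)),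
      (ee p * ((z p.1 - z p.2 : ℝ) : ℂ)⁻¹) *
        (((Pi.single k 1 : Fin r → ℝ) p.1 - (Pi.single k 1 : Fin r → ℝ) p.2 : ℝ) : ℂ) = 0 := by
    refine Finset.sum_eq_zero fun p hp => ?_
    have hmem := Finset.mem_filter.1 hp
    push_neg at hmem
    simp [Pi.single_apply, hmem.2.1, hmem.2.2]
  rw [hz2, add_zero]
  refine Finset.sum_nbij' (fun p => if p.1 = k then p.2 else p.1)
    (fun j => if k < j then (k, j) else (j, k)) ?_ ?_ ?_ ?_ ?_
  · intro p hp
    have hm := Finset.mem_filter.1 hp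
    have hlt : p.1 < p.2 := by simpa [hSdef] using hm.1
    rcases hm.2 with h | h
    · rw [if_pos h]
      exact Finset.mem_erase.2 ⟨by rw [← h]; exact hlt.ne', Finset.mem_univ _⟩
    · have h1 : p.1 ≠ k := by rw [← h]; exact hlt.ne
      rw [if_neg h1]
      exact Finset.mem_erase.2 ⟨h1, Finset.mem_univ _⟩
  · intro j hj
    have hjk : j ≠ k := (Finset.mem_erase.1 hj).1
    rcases lt_or_gt_of_ne hjk with h | h
    · rw [if_neg (not_lt.2 h.le)]
      refine Finset.mem_filter.2 ⟨?_, Or.inr rfl⟩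
      simp only [hSdef, Finset.mem_filter, Finset.mem_univ, true_and]
      exact h
    · rw [if_pos h]
      refine Finset.mem_filter.2 ⟨?_, Or.inl rfl⟩
      simp only [hSdef, Finset.mem_filter, Finset.mem_univ, true_and]
      exact h
  · intro p hp
    have hm := Finset.mem_filter.1 hp
    have hlt : p.1 < p.2 := by simpa [hSdef] using hm.1
    rcases hm.2 with h | h
    · rw [if_pos h, if_pos (show k < p.2 by rw [← h]; exact hlt)]
      exact Prod.ext h.symm rfl
    · have h1 : p.1 ≠ k := by rw [← h]; exact hlt.ne
      rw [if_neg h1, if_neg (show ¬ k < p.1 by rw [← h]; exact not_lt.2 hlt.le)]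
      exact Prod.ext rfl h.symm
  · intro j hj
    have hjk : j ≠ k := (Finset.mem_erase.1 hj).1
    rcases lt_or_gt_of_ne hjk with h | h
    · rw [if_neg (not_lt.2 h.le)]
      simp [hjk]
    · rw [if_pos h]
      simp
  · intro p hp
    have hm := Finset.mem_filter.1 hp
    have hlt : p.1 < p.2 := by simpa [hSdef] using hm.1
    rcases hm.2 with h | h
    · have h2 : p.2 ≠ k := by rw [← h]; exact hlt.ne'
      rw [if_pos h, if_pos (show k < p.2 by rw [← h]; exact hlt)]
      simp only [heedef, Pi.single_apply, h, if_pos rfl, if_neg h2]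
      push_cast
      ring
    · have h1 : p.1 ≠ k := by rw [← h]; exact hlt.ne
      rw [if_neg h1, if_neg (show ¬ k < p.1 by rw [← h]; exact not_lt.2 hlt.le)]
      simp only [heedef, Pi.single_apply, h, if_pos rfl, if_neg h1]
      have hcast : ((z k - z p.1 : ℝ) : ℂ) = -(((z p.1 - z k : ℝ) : ℂ)) := by
        push_cast; ring
      rw [hcast, inv_neg]
      push_cast
      ring


/-- **Theorem 3.5 (concrete form of the KZ–dynamical correspondence).**
Under the CAR setup, a differentiable function `f : U → E` in the `β`-weight space
satisfies the KZ system `∂f/∂z_k = ℏ Σ_{j≠k} (z_k - z_j)⁻¹ Ω_{kj} f` iff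
`u(z) = (Π_{i<j} (z_i - z_j)^{-β_j ℏ}) f(z)` satisfies the dynamical system
`∂u/∂z_k = -ℏ Σ_{j≠k} (z_k - z_j)⁻¹ D̂_{kj} u`, where `D̂_{kj} = D_{kj}` if `k < j`
and `D̂_{kj} = D_{jk}` otherwise, with `D_{ij} = F_{ji} ∘ F_{ij}` for `i < j`. -/
theorem theorem3_5 (t r : ℕ) (ht : 0 < t) (hr : 0 < r)
    (E : Type*) [NormedAddCommGroup E] [NormedSpace ℂ E]
    (x d : Fin t → Fin r → Module.End ℂ E)
    (hxx : ∀ a i b j, x a i * x b j + x b j * x a i = 0)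
    (hdd : ∀ a i b j, d a i * d b j + d b j * d a i = 0)
    (hxd : ∀ a i b j, x a i * d b j + d b j * x a i =
      if a = b ∧ i = j then 1 else 0)
    (Ω : Fin r → Fin r → Module.End ℂ E)
    (hΩ : ∀ i j, Ω i j = ∑ a : Fin t, ∑ b : Fin t, x a i * d b i * x b j * d a j)
    (H : Fin r → Module.End ℂ E)
    (hH : ∀ i, H i = ∑ a : Fin t, x a i * d a i)
    (F : Fin r → Fin r → Module.End ℂ E)
    (hF : ∀ i j, F i j = ∑ a : Fin t, x a i * d a j)
    (Dhat : Fin r → Fin r → Module.End ℂ E)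
    (hDhat : ∀ k j, Dhat k j = if k < j then F j k * F k j else F k j * F j k)
    (ℏ : ℂ) (β : Fin r → ℂ)
    (U : Set (Fin r → ℝ)) (hU : U = {z | ∀ i j : Fin r, i < j → z j < z i})
    (f : (Fin r → ℝ) → E)
    (hfdiff : ∀ z ∈ U, DifferentiableAt ℝ f z)
    (hfwt : ∀ z ∈ U, ∀ i, H i (f z) = β i • f z)
    (u : (Fin r → ℝ) → E)
    (hu : ∀ z, u z =
      (∏ i : Fin r, ∏ j ∈ Finset.univ.filter (fun j => i < j),
        ((z i - z j : ℝ) : ℂ) ^ (-(β j) * ℏ)) • f z) :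
    (∀ z ∈ U, ∀ k : Fin r, fderiv ℝ f z (Pi.single k 1)
        = ℏ • ∑ j ∈ Finset.univ.erase k, ((z k - z j : ℝ) : ℂ)⁻¹ • Ω k j (f z))
    ↔ (∀ z ∈ U, ∀ k : Fin r, fderiv ℝ u z (Pi.single k 1)
        = (-ℏ) • ∑ j ∈ Finset.univ.erase k,
            ((z k - z j : ℝ) : ℂ)⁻¹ • Dhat k j (u z)) := by
  classical
  have hΩD : ∀ k j : Fin r, j ≠ k → Ω k j = (if k < j then H j else H k) - Dhat k j := by
    intro k j hjk
    obtain ⟨h1, h2⟩ := car_identities x d hxx hdd hxd k j (Ne.symm hjk)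
    by_cases hlt : k < j
    · rw [hΩ, hDhat, if_pos hlt, if_pos hlt, hH, hF, hF, h1]
    · rw [hΩ, hDhat, if_neg hlt, if_neg hlt, hH, hF, hF, h2]
  set φ : (Fin r → ℝ) → ℂ := fun y =>
    ∏ p ∈ Finset.univ.filter (fun p : Fin r × Fin r => p.1 < p.2),
      ((y p.1 - y p.2 : ℝ) : ℂ) ^ (-(β p.2) * ℏ) with hφdef
  have huφ : u = fun y => φ y • f y := by
    funext y
    rw [hu y]
    congr 1
    exact (prod_pairs (fun i j => ((y i - y j : ℝ) : ℂ) ^ (-(β j) * ℏ))).symm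
  suffices h : ∀ z ∈ U, ∀ k : Fin r,
      (fderiv ℝ f z (Pi.single k 1)
        = ℏ • ∑ j ∈ Finset.univ.erase k, ((z k - z j : ℝ) : ℂ)⁻¹ • Ω k j (f z))
      ↔ (fderiv ℝ u z (Pi.single k 1)
        = (-ℏ) • ∑ j ∈ Finset.univ.erase k,
            ((z k - z j : ℝ) : ℂ)⁻¹ • Dhat k j (u z)) by
    constructor
    · intro hkz z hz k; exact (h z hz k).1 (hkz z hz k)
    · intro hkz z hz k; exact (h z hz k).2 (hkz z hz k)
  intro z hz k
  have hzU : ∀ i j : Fin r, i < j → z j < z i := by rw [hU] at hz; exact hz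
  obtain ⟨Φ, hΦder, hΦval⟩ := phi_deriv β ℏ z hzU
  have hφzne : φ z ≠ 0 := by
    rw [hφdef]
    refine Finset.prod_ne_zero_iff.2 fun p hp => ?_
    have hlt : p.1 < p.2 := (Finset.mem_filter.1 hp).2
    have hbpos : (0 : ℝ) < z p.1 - z p.2 := by have := hzU p.1 p.2 hlt; linarith
    have hbne : ((z p.1 - z p.2 : ℝ) : ℂ) ≠ 0 := by exact_mod_cast hbpos.ne'
    rw [Ne, Complex.cpow_eq_zero_iff]
    tauto
  set w : Fin r → ℂ := fun j => ((z k - z j : ℝ) : ℂ)⁻¹ with hwdef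
  set cc : Fin r → ℂ := fun j => if k < j then β j else β k with hccdef
  set s : ℂ := ∑ j ∈ Finset.univ.erase k, (-(ℏ * cc j)) * w j with hsdef
  set A : E := fderiv ℝ f z (Pi.single k 1) with hAdef
  set B : E := ∑ j ∈ Finset.univ.erase k, w j • Dhat k j (f z) with hBdef
  have hΩval : ∀ j ∈ Finset.univ.erase k, w j • Ω k j (f z)
      = (w j * cc j) • f z - w j • Dhat k j (f z) := by
    intro j hj
    have hjk : j ≠ k := (Finset.mem_erase.1 hj).1
    rw [hΩD k j hjk, LinearMap.sub_apply, smul_sub]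
    congr 1
    have : ((if k < j then H j else H k) : Module.End ℂ E) (f z) = cc j • f z := by
      by_cases hlt : k < j
      · rw [if_pos hlt, hccdef]; simp only [if_pos hlt]; exact hfwt z hz j
      · rw [if_neg hlt, hccdef]; simp only [if_neg hlt]; exact hfwt z hz k
    rw [this, smul_smul]
  have hKZrhs : ℏ • ∑ j ∈ Finset.univ.erase k, w j • Ω k j (f z)
      = (-s) • f z - ℏ • B := by
    rw [Finset.sum_congr rfl hΩval, Finset.sum_sub_distrib, ← Finset.sum_smul,
      smul_sub, smul_smul, hBdef]
    congr 1
    have hns : -s = ℏ * ∑ j ∈ Finset.univ.erase k, w j * cc j := by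
      rw [hsdef, Finset.mul_sum, ← Finset.sum_neg_distrib]
      exact Finset.sum_congr rfl fun j _ => by ring
    rw [← hns]
  have hfder : HasFDerivAt f (fderiv ℝ f z) z := (hfdiff z hz).hasFDerivAt
  have huder : HasFDerivAt u (φ z • fderiv ℝ f z + Φ.smulRight (f z)) z := by
    rw [huφ]
    exact hΦder.smul hfder
  have hΦs : Φ (Pi.single k 1) = φ z * s := hΦval k
  have hudval : fderiv ℝ u z (Pi.single k 1) = φ z • A + (φ z * s) • f z := by
    rw [huder.fderiv, ContinuousLinearMap.add_apply, ContinuousLinearMap.smul_apply,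
      ContinuousLinearMap.smulRight_apply, hΦs, hAdef]
  have hDynrhs : (-ℏ) • ∑ j ∈ Finset.univ.erase k, w j • Dhat k j (u z)
      = φ z • ((-ℏ) • B) := by
    have hterm : ∀ j ∈ Finset.univ.erase k, w j • Dhat k j (u z)
        = φ z • (w j • Dhat k j (f z)) := by
      intro j hj
      have huz : u z = φ z • f z := by rw [huφ]
      rw [huz, map_smul, smul_comm]
    rw [Finset.sum_congr rfl hterm, ← Finset.smul_sum, hBdef, smul_comm]
  constructor
  · intro hKZ
    rw [hKZrhs] at hKZ
    rw [hudval, hDynrhs, hKZ]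
    module
  · intro hDyn
    rw [hudval, hDynrhs] at hDyn
    have hfold : φ z • (A + s • f z) = φ z • ((-ℏ) • B) := by
      rw [smul_add, smul_smul]; exact hDyn
    have hc : A + s • f z = (-ℏ) • B := smul_right_injective E hφzne hfold
    rw [hKZrhs]
    have hA : A = (-ℏ) • B - s • f z := eq_sub_of_add_eq hc
    rw [hA]
    module
end

section
/- (Identity (5.5)–(5.9): expression of the orthogonal Casimir through the dual so_{2n}-generators) For all 1 ≤ a ≠ b ≤ n, one has the equality of linear endomorphisms of E: Ω_{a,b} = −(1/2)·(M_{a,b}∘M_{b,a} + M_{−a,b}∘M_{b,−a}) + (t/4)·id − (1/2)·M_{b,b}. -/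
private lemma swap3 {R : Type*} [Ring R] {a b : R} (h : b * a = -(a * b)) (c : R) :
    b * (a * c) = -(a * (b * c)) := by
  rw [← mul_assoc, h, neg_mul, mul_assoc]

private lemma swapC {R : Type*} [Ring R] {a b : R} (h : b * a = 1 - a * b) (c : R) :
    b * (a * c) = c - a * (b * c) := by
  rw [← mul_assoc, h, sub_mul, one_mul, mul_assoc]

private lemma diag_car {R : Type*} [Ring R] (x1 x2 x3 x4 : R)
    (h12 : x2 * x1 = 1 - x1 * x2) (h34 : x4 * x3 = 1 - x3 * x4)
    (h13 : x3 * x1 = -(x1 * x3)) (h14 : x4 * x1 = -(x1 * x4))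
    (h23 : x3 * x2 = -(x2 * x3)) (h24 : x4 * x2 = -(x2 * x4)) :
    x1 * x4 * (x3 * x2) + x2 * x4 * (x3 * x1) = 1 - x3 * x4 := by
  simp only [mul_assoc]
  simp only [h12, h34, h13, h14, h23, h24, swap3 h13, swap3 h14, swap3 h23, swap3 h24,
    swapC h12, swapC h34, mul_sub, sub_mul, mul_neg, neg_mul, neg_neg, mul_one, one_mul]
  abel

private lemma offdiag_car {R : Type*} [Ring R] (x1 x2 x3 x4 x5 x6 x7 x8 : R)
    (h13 : x3 * x1 = -(x1 * x3)) (h14 : x4 * x1 = -(x1 * x4))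
    (h15 : x5 * x1 = -(x1 * x5)) (h16 : x6 * x1 = -(x1 * x6))
    (h17 : x7 * x1 = -(x1 * x7)) (h18 : x8 * x1 = -(x1 * x8))
    (h23 : x3 * x2 = -(x2 * x3)) (h24 : x4 * x2 = -(x2 * x4))
    (h25 : x5 * x2 = -(x2 * x5)) (h26 : x6 * x2 = -(x2 * x6))
    (h27 : x7 * x2 = -(x2 * x7)) (h28 : x8 * x2 = -(x2 * x8))
    (h35 : x5 * x3 = -(x3 * x5)) (h36 : x6 * x3 = -(x3 * x6))
    (h37 : x7 * x3 = -(x3 * x7)) (h38 : x8 * x3 = -(x3 * x8))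
    (h45 : x5 * x4 = -(x4 * x5)) (h46 : x6 * x4 = -(x4 * x6))
    (h47 : x7 * x4 = -(x4 * x7)) (h48 : x8 * x4 = -(x4 * x8))
    (h57 : x7 * x5 = -(x5 * x7)) (h58 : x8 * x5 = -(x5 * x8))
    (h67 : x7 * x6 = -(x6 * x7)) (h68 : x8 * x6 = -(x6 * x8)) :
    (x1 * x6 - x5 * x2) * (x7 * x4 - x3 * x8)
      + ((x1 * x4 * (x7 * x6) + x2 * x4 * (x7 * x5))
        + (x5 * x8 * (x3 * x2) + x6 * x8 * (x3 * x1))) = 0 := by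
  simp only [mul_sub, sub_mul, mul_assoc]
  simp only [h13, h14, h15, h16, h17, h18, h23, h24, h25, h26, h27, h28,
    h35, h36, h37, h38, h45, h46, h47, h48, h57, h58, h67, h68,
    swap3 h13, swap3 h14, swap3 h15, swap3 h16, swap3 h17, swap3 h18,
    swap3 h23, swap3 h24, swap3 h25, swap3 h26, swap3 h27, swap3 h28,
    swap3 h35, swap3 h36, swap3 h37, swap3 h38,
    swap3 h45, swap3 h46, swap3 h47, swap3 h48,
    swap3 h57, swap3 h58, swap3 h67, swap3 h68,
    mul_neg, neg_mul, neg_neg]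
  abel

private lemma double_sum_split {M : Type*} [AddCommMonoid M] {t : ℕ} (f : Fin t → Fin t → M) :
    ∑ k : Fin t, ∑ l : Fin t, f k l
      = (∑ k : Fin t, f k k)
        + ∑ k : Fin t, ∑ l ∈ Finset.univ.filter (fun l => k < l), (f k l + f l k) := by
  have h1 : ∀ k : Fin t, ∑ l : Fin t, f k l
      = f k k + ((∑ l ∈ Finset.univ.filter (fun l => k < l), f k l)
        + ∑ l ∈ Finset.univ.filter (fun l => l < k), f k l) := by
    intro k
    rw [← Finset.sum_filter_add_sum_filter_not Finset.univ (fun l => k < l) (f k)]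
    have hins : Finset.univ.filter (fun l => ¬ k < l)
        = insert k (Finset.univ.filter (fun l : Fin t => l < k)) := by
      ext l
      simp [not_lt, le_iff_lt_or_eq, or_comm]
    rw [hins, Finset.sum_insert (by simp)]
    abel
  have h2 : ∑ k : Fin t, ∑ l ∈ Finset.univ.filter (fun l => l < k), f k l
      = ∑ l : Fin t, ∑ k ∈ Finset.univ.filter (fun k => l < k), f k l :=
    Finset.sum_comm' (by intro k l; simp)
  calc ∑ k : Fin t, ∑ l : Fin t, f k l
      = ∑ k : Fin t, (f k k + ((∑ l ∈ Finset.univ.filter (fun l => k < l), f k l)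
        + ∑ l ∈ Finset.univ.filter (fun l => l < k), f k l)) :=
        Finset.sum_congr rfl fun k _ => h1 k
    _ = (∑ k : Fin t, f k k) + ((∑ k : Fin t, ∑ l ∈ Finset.univ.filter (fun l => k < l), f k l)
        + ∑ k : Fin t, ∑ l ∈ Finset.univ.filter (fun l => l < k), f k l) := by
        rw [Finset.sum_add_distrib, Finset.sum_add_distrib]
    _ = (∑ k : Fin t, f k k) + ((∑ k : Fin t, ∑ l ∈ Finset.univ.filter (fun l => k < l), f k l)
        + ∑ k : Fin t, ∑ l ∈ Finset.univ.filter (fun l => k < l), f l k) := by rw [h2]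
    _ = (∑ k : Fin t, f k k)
        + ∑ k : Fin t, ∑ l ∈ Finset.univ.filter (fun l => k < l), (f k l + f l k) := by
        rw [← Finset.sum_add_distrib]
        exact congrArg _ (Finset.sum_congr rfl fun k _ => (Finset.sum_add_distrib).symm)

/-- **Identity (5.5)–(5.9).**  Under the CAR setup on `E` (exterior algebra on basis
`v_{k,a}`, `1 ≤ k ≤ t`, `1 ≤ a ≤ n`), with the dual `so_{2n}`-generators
`M_{a,b} = Σ_k (x_{k,a} ∂_{k,b} - ∂_{k,b} x_{k,a})/2`,
`M_{-a,b} = Σ_k (∂_{k,a} ∂_{k,b} - ∂_{k,b} ∂_{k,a})/2`,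
`M_{b,-a} = Σ_k (x_{k,b} x_{k,a} - x_{k,a} x_{k,b})/2`,
and the orthogonal Casimir
`Ω_{a,b} = (1/2) Σ_{k<l} (x_{k,a} ∂_{l,a} - x_{l,a} ∂_{k,a})(x_{l,b} ∂_{k,b} - x_{k,b} ∂_{l,b})`,
one has `Ω_{a,b} = -(1/2)(M_{a,b} M_{b,a} + M_{-a,b} M_{b,-a}) + (t/4)·id - (1/2) M_{b,b}`
for all `a ≠ b`. -/
theorem identity5_5_to_5_9 (t n : ℕ) (ht : 0 < t) (hn : 0 < n)
    (E : Type*) [AddCommGroup E] [Module ℂ E]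
    (x d : Fin t → Fin n → Module.End ℂ E)
    (hxx : ∀ k a l b, x k a * x l b + x l b * x k a = 0)
    (hdd : ∀ k a l b, d k a * d l b + d l b * d k a = 0)
    (hxd : ∀ k a l b, x k a * d l b + d l b * x k a =
      if k = l ∧ a = b then 1 else 0)
    (MP : Fin n → Fin n → Module.End ℂ E)
    (hMP : ∀ a b, MP a b = ∑ k : Fin t, ((2 : ℂ)⁻¹) • (x k a * d k b - d k b * x k a))
    (MN : Fin n → Fin n → Module.End ℂ E)
    (hMN : ∀ a b, MN a b = ∑ k : Fin t, ((2 : ℂ)⁻¹) • (d k a * d k b - d k b * d k a))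
    (MB : Fin n → Fin n → Module.End ℂ E)
    (hMB : ∀ b a, MB b a = ∑ k : Fin t, ((2 : ℂ)⁻¹) • (x k b * x k a - x k a * x k b))
    (Ω : Fin n → Fin n → Module.End ℂ E)
    (hΩ : ∀ a b, Ω a b = ((2 : ℂ)⁻¹) •
      ∑ k : Fin t, ∑ l ∈ Finset.univ.filter (fun l => k < l),
        (x k a * d l a - x l a * d k a) * (x l b * d k b - x k b * d l b)) :
    ∀ a b : Fin n, a ≠ b →
      Ω a b = (-(2 : ℂ)⁻¹) • (MP a b * MP b a + MN a b * MB b a)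
        + ((t : ℂ) / 4) • (1 : Module.End ℂ E) - ((2 : ℂ)⁻¹) • MP b b := by
  intro a b hab
  have hba : b ≠ a := hab.symm
  -- basic swap consequences of the CAR
  have Hxx : ∀ (k : Fin t) (c : Fin n) (l : Fin t) (e : Fin n),
      x l e * x k c = -(x k c * x l e) :=
    fun k c l e => eq_neg_of_add_eq_zero_right (hxx k c l e)
  have Hdd : ∀ (k : Fin t) (c : Fin n) (l : Fin t) (e : Fin n),
      d l e * d k c = -(d k c * d l e) :=
    fun k c l e => eq_neg_of_add_eq_zero_right (hdd k c l e)
  have Hdx : ∀ (k : Fin t) (c : Fin n) (l : Fin t) (e : Fin n),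
      ¬(k = l ∧ c = e) → d l e * x k c = -(x k c * d l e) :=
    fun k c l e h => eq_neg_of_add_eq_zero_right ((hxd k c l e).trans (if_neg h))
  have Hxd : ∀ (k : Fin t) (c : Fin n) (l : Fin t) (e : Fin n),
      ¬(k = l ∧ c = e) → x k c * d l e = -(d l e * x k c) :=
    fun k c l e h => eq_neg_of_add_eq_zero_left ((hxd k c l e).trans (if_neg h))
  have Hcar : ∀ (k : Fin t) (c : Fin n), d k c * x k c = 1 - x k c * d k c :=
    fun k c => eq_sub_of_add_eq' ((hxd k c k c).trans (if_pos ⟨rfl, rfl⟩))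
  have half2 : ∀ p : Module.End ℂ E, (2 : ℂ)⁻¹ • (p - -p) = p := by
    intro p
    rw [sub_neg_eq_add, ← two_smul ℂ, smul_smul]
    norm_num
  -- simplified forms of the generators
  have hPab : MP a b = ∑ k : Fin t, x k a * d k b := by
    rw [hMP]
    exact Finset.sum_congr rfl fun k _ => by
      rw [Hdx k a k b (fun h => hab h.2), half2]
  have hPba : MP b a = ∑ k : Fin t, x k b * d k a := by
    rw [hMP]
    exact Finset.sum_congr rfl fun k _ => by
      rw [Hdx k b k a (fun h => hba h.2), half2]
  have hNab : MN a b = ∑ k : Fin t, d k a * d k b := by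
    rw [hMN]
    exact Finset.sum_congr rfl fun k _ => by
      rw [Hdd k a k b, half2]
  have hBba : MB b a = ∑ k : Fin t, x k b * x k a := by
    rw [hMB]
    exact Finset.sum_congr rfl fun k _ => by
      rw [Hxx k b k a, half2]
  have hPbb : MP b b = (∑ k : Fin t, x k b * d k b) - ((t : ℂ) / 2) • (1 : Module.End ℂ E) := by
    rw [hMP]
    have e1 : ∀ k : Fin t, (2 : ℂ)⁻¹ • (x k b * d k b - d k b * x k b)
        = x k b * d k b - (2 : ℂ)⁻¹ • (1 : Module.End ℂ E) := by
      intro k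
      rw [Hcar k b, show x k b * d k b - (1 - x k b * d k b)
        = (x k b * d k b - -(x k b * d k b)) - 1 by abel, smul_sub, half2]
    rw [Finset.sum_congr rfl fun k _ => e1 k, Finset.sum_sub_distrib, Finset.sum_const,
      Finset.card_univ, Fintype.card_fin]
    congr 1
    rw [← Nat.cast_smul_eq_nsmul ℂ, smul_smul, div_eq_mul_inv]
  -- the key per-pair identities
  have key2 : ∀ k : Fin t,
      (x k a * d k b) * (x k b * d k a) + (d k a * d k b) * (x k b * x k a)
        = 1 - x k b * d k b :=
    fun k => diag_car (x k a) (d k a) (x k b) (d k b)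
      (Hcar k a) (Hcar k b) (Hxx k a k b) (Hdx k a k b (fun h => hab h.2))
      (Hxd k b k a (fun h => hba h.2)) (Hdd k a k b)
  have key3 : ∀ k l : Fin t, k < l →
      (x k a * d l a - x l a * d k a) * (x l b * d k b - x k b * d l b)
        = -(((x k a * d k b) * (x l b * d l a) + (d k a * d k b) * (x l b * x l a))
          + ((x l a * d l b) * (x k b * d k a) + (d l a * d l b) * (x k b * x k a))) := by
    intro k l hkl
    have hkl' : k ≠ l := ne_of_lt hkl
    have hlk : l ≠ k := hkl'.symm
    exact eq_neg_of_add_eq_zero_left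
      (offdiag_car (x k a) (d k a) (x k b) (d k b) (x l a) (d l a) (x l b) (d l b)
        (Hxx k a k b) (Hdx k a k b (fun h => hab h.2))
        (Hxx k a l a) (Hdx k a l a (fun h => hkl' h.1))
        (Hxx k a l b) (Hdx k a l b (fun h => hkl' h.1))
        (Hxd k b k a (fun h => hba h.2)) (Hdd k a k b)
        (Hxd l a k a (fun h => hlk h.1)) (Hdd k a l a)
        (Hxd l b k a (fun h => hlk h.1)) (Hdd k a l b)
        (Hxx k b l a) (Hdx k b l a (fun h => hkl' h.1))
        (Hxx k b l b) (Hdx k b l b (fun h => hkl' h.1))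
        (Hxd l a k b (fun h => hlk h.1)) (Hdd k b l a)
        (Hxd l b k b (fun h => hlk h.1)) (Hdd k b l b)
        (Hxx l a l b) (Hdx l a l b (fun h => hab h.2))
        (Hxd l b l a (fun h => hba h.2)) (Hdd l a l b))
  have hsplit := double_sum_split (fun k l : Fin t =>
    (x k a * d k b) * (x l b * d l a) + (d k a * d k b) * (x l b * x l a))
  rw [hΩ a b, hPab, hPba, hNab, hBba, hPbb, Finset.sum_mul_sum, Finset.sum_mul_sum]
  have e2 : (∑ k : Fin t, ∑ l : Fin t, (x k a * d k b) * (x l b * d l a))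
      + ∑ k : Fin t, ∑ l : Fin t, (d k a * d k b) * (x l b * x l a)
      = ∑ k : Fin t, ∑ l : Fin t,
        ((x k a * d k b) * (x l b * d l a) + (d k a * d k b) * (x l b * x l a)) := by
    rw [← Finset.sum_add_distrib]
    exact Finset.sum_congr rfl fun k _ => (Finset.sum_add_distrib).symm
  have h4 : (∑ k : Fin t, ∑ l ∈ Finset.univ.filter (fun l => k < l),
        (((x k a * d k b) * (x l b * d l a) + (d k a * d k b) * (x l b * x l a))
          + ((x l a * d l b) * (x k b * d k a) + (d l a * d l b) * (x k b * x k a))))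
      = (∑ k : Fin t, ∑ l : Fin t,
          ((x k a * d k b) * (x l b * d l a) + (d k a * d k b) * (x l b * x l a)))
        - ∑ k : Fin t,
          ((x k a * d k b) * (x k b * d k a) + (d k a * d k b) * (x k b * x k a)) :=
    eq_sub_of_add_eq' hsplit.symm
  have e3 : (∑ k : Fin t, ∑ l ∈ Finset.univ.filter (fun l => k < l),
        (x k a * d l a - x l a * d k a) * (x l b * d k b - x k b * d l b))
      = (∑ k : Fin t, ((1 : Module.End ℂ E) - x k b * d k b))
        - ∑ k : Fin t, ∑ l : Fin t,
          ((x k a * d k b) * (x l b * d l a) + (d k a * d k b) * (x l b * x l a)) := by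
    refine (Finset.sum_congr rfl fun k _ => Finset.sum_congr rfl fun l hl =>
      key3 k l (by simpa using hl)).trans ?_
    simp only [Finset.sum_neg_distrib]
    rw [h4, neg_sub]
    rw [Finset.sum_congr rfl fun k _ => key2 k]
  rw [e2, e3]
  have e5 : ∑ k : Fin t, ((1 : Module.End ℂ E) - x k b * d k b)
      = (t : ℂ) • (1 : Module.End ℂ E) - ∑ k : Fin t, x k b * d k b := by
    rw [Finset.sum_sub_distrib, Finset.sum_const, Finset.card_univ, Fintype.card_fin,
      Nat.cast_smul_eq_nsmul]
  rw [e5]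
  module
end

section
/- (Flatness of the dual connection (5.14)) For 1 ≤ a ≠ b ≤ n set K̂_{a,b} := K_{min(a,b),max(a,b)}. Then for every z ∈ ℂ^n with pairwise distinct coordinates and every pair a ≠ b, the endomorphisms A_a(z) := Σ_{c ≠ a} (z_a − z_c)^{−1}·K̂_{a,c} of E satisfy the commutation relation A_a(z)∘A_b(z) = A_b(z)∘A_a(z); equivalently, for every ℏ ∈ ℂ the connection d + ℏ·Σ_{a<b} dlog(z_a − z_b)·K_{a,b} on the trivial bundle with fiber E is flat. -/
namespace FlatAux
section
variable {R : Type*} [Ring R]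

lemma comm4' (A B C D S1 S2 S3 S4 : R) (h1 : C*B + B*C = S1) (h2 : A*C + C*A = S2)
    (h3 : B*D + D*B = S3) (h4 : A*D + D*A = S4) :
    A*B*(C*D) - C*D*(A*B) = A*(S1*D) - S2*(B*D) + C*(A*S3) - C*(S4*B) := by
  subst h1 h2 h3 h4; noncomm_ring

lemma sum_comm_diag {t : ℕ} (f g : Fin t → R)
    (h : ∀ k l, k ≠ l → f k * g l - g l * f k = 0) :
    (∑ k, f k) * (∑ k, g k) - (∑ k, g k) * (∑ k, f k) = ∑ k, (f k * g k - g k * f k) := by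
  rw [Finset.sum_mul_sum, Finset.sum_mul_sum]
  rw [Finset.sum_comm (f := fun k l => g k * f l)]
  rw [← Finset.sum_sub_distrib]
  refine Finset.sum_congr rfl fun k _ => ?_
  rw [← Finset.sum_sub_distrib]
  rw [Finset.sum_eq_single k (fun l _ hlk => h k l (Ne.symm hlk)) (by simp)]
end

section
variable {t n : ℕ} {E : Type*} [AddCommGroup E] [Module ℂ E]

def Pop (x d : Fin t → Fin n → Module.End ℂ E) (a b : Fin n) : Module.End ℂ E :=
  ∑ k, x k a * d k b
def Dop (d : Fin t → Fin n → Module.End ℂ E) (a b : Fin n) : Module.End ℂ E :=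
  ∑ k, d k a * d k b
def Xop (x : Fin t → Fin n → Module.End ℂ E) (a b : Fin n) : Module.End ℂ E :=
  ∑ k, x k a * x k b

variable (x d : Fin t → Fin n → Module.End ℂ E)
variable (hxx : ∀ k a l b, x k a * x l b + x l b * x k a = 0)
variable (hdd : ∀ k a l b, d k a * d l b + d l b * d k a = 0)
variable (hxd : ∀ k a l b, x k a * d l b + d l b * x k a =
      if k = l ∧ a = b then 1 else 0)

include hxd in
lemma hdx' : ∀ (k : Fin t) (a : Fin n) (l : Fin t) (b : Fin n),
    d l b * x k a + x k a * d l b = if k = l ∧ a = b then 1 else 0 := fun k a l b => by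
  rw [add_comm]; exact hxd k a l b

include hdd in
lemma Dswap (a b : Fin n) : Dop d a b + Dop d b a = 0 := by
  unfold Dop; rw [← Finset.sum_add_distrib]; simp [hdd]

include hxx in
lemma Xswap (a b : Fin n) : Xop x a b + Xop x b a = 0 := by
  unfold Xop; rw [← Finset.sum_add_distrib]; simp [hxx]

include hdd in
lemma Dzero (a : Fin n) : Dop d a a = 0 := by
  have h := Dswap d hdd a a
  have h2 : (2:ℂ) • Dop d a a = 0 := by rw [two_smul]; exact h
  simpa using (smul_eq_zero.mp h2).resolve_left (by norm_num)

include hxx in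
lemma Xzero (a : Fin n) : Xop x a a = 0 := by
  have h := Xswap x hxx a a
  have h2 : (2:ℂ) • Xop x a a = 0 := by rw [two_smul]; exact h
  simpa using (smul_eq_zero.mp h2).resolve_left (by norm_num)

include hxd in
lemma sum_dx (a e : Fin n) : (∑ k, d k a * x k e) =
    (if e = a then ((t : ℕ) : Module.End ℂ E) else 0) - Pop x d e a := by
  have site : ∀ k : Fin t, d k a * x k e =
      (if e = a then (1 : Module.End ℂ E) else 0) - x k e * d k a := fun k => by
    have h := hxd k e k a
    simp only [eq_self_iff_true, true_and] at h
    exact eq_sub_of_add_eq' h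
  rw [Finset.sum_congr rfl fun k _ => site k, Finset.sum_sub_distrib,
    Finset.sum_ite_irrel, Finset.sum_const, Finset.sum_const_zero]
  simp only [Finset.card_univ, Fintype.card_fin, nsmul_eq_mul, mul_one]
  rfl

include hxx hdd hxd in
lemma br_PP (a b c e : Fin n) :
    Pop x d a b * Pop x d c e - Pop x d c e * Pop x d a b =
      (if c = b then Pop x d a e else 0) - (if a = e then Pop x d c b else 0) := by
  unfold Pop
  rw [sum_comm_diag _ _ (fun k l hkl => by
    rw [comm4' _ _ _ _ _ _ _ _ (hxd l c k b) (hxx k a l c) (hdd k b l e) (hxd k a l e)]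
    simp [hkl, Ne.symm hkl])]
  have site : ∀ k : Fin t, x k a * d k b * (x k c * d k e) - x k c * d k e * (x k a * d k b)
      = (if c = b then x k a * d k e else 0) - (if a = e then x k c * d k b else 0) := fun k => by
    rw [comm4' _ _ _ _ _ _ _ _ (hxd k c k b) (hxx k a k c) (hdd k b k e) (hxd k a k e)]
    simp only [eq_self_iff_true, true_and, mul_ite, ite_mul, mul_one, one_mul, mul_zero,
      zero_mul, sub_zero, zero_sub, add_zero, zero_add]
  rw [Finset.sum_congr rfl fun k _ => site k, Finset.sum_sub_distrib,
    Finset.sum_ite_irrel, Finset.sum_ite_irrel, Finset.sum_const_zero]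

include hxx hdd hxd in
lemma br_PD (a b c e : Fin n) :
    Pop x d a b * Dop d c e - Dop d c e * Pop x d a b =
      -(if a = c then Dop d b e else 0) - (if a = e then Dop d c b else 0) := by
  unfold Pop Dop
  rw [sum_comm_diag _ _ (fun k l hkl => by
    rw [comm4' _ _ _ _ _ _ _ _ (hdd l c k b) (hxd k a l c) (hdd k b l e) (hxd k a l e)]
    simp [hkl, Ne.symm hkl])]
  have site : ∀ k : Fin t, x k a * d k b * (d k c * d k e) - d k c * d k e * (x k a * d k b)
      = -(if a = c then d k b * d k e else 0) - (if a = e then d k c * d k b else 0) := fun k => by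
    rw [comm4' _ _ _ _ _ _ _ _ (hdd k c k b) (hxd k a k c) (hdd k b k e) (hxd k a k e)]
    simp only [eq_self_iff_true, true_and, mul_ite, ite_mul, mul_one, one_mul, mul_zero,
      zero_mul, sub_zero, zero_sub, add_zero, zero_add]
  rw [Finset.sum_congr rfl fun k _ => site k, Finset.sum_sub_distrib, Finset.sum_neg_distrib,
    Finset.sum_ite_irrel, Finset.sum_ite_irrel, Finset.sum_const_zero]

include hxx hdd hxd in
lemma br_PX (a b c e : Fin n) :
    Pop x d a b * Xop x c e - Xop x c e * Pop x d a b =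
      (if c = b then Xop x a e else 0) + (if e = b then Xop x c a else 0) := by
  unfold Pop Xop
  rw [sum_comm_diag _ _ (fun k l hkl => by
    rw [comm4' _ _ _ _ _ _ _ _ (hxd l c k b) (hxx k a l c)
      (hdx' x d hxd l e k b) (hxx k a l e)]
    simp [hkl, Ne.symm hkl])]
  have site : ∀ k : Fin t, x k a * d k b * (x k c * x k e) - x k c * x k e * (x k a * d k b)
      = (if c = b then x k a * x k e else 0) + (if e = b then x k c * x k a else 0) := fun k => by
    rw [comm4' _ _ _ _ _ _ _ _ (hxd k c k b) (hxx k a k c)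
      (hdx' x d hxd k e k b) (hxx k a k e)]
    simp only [eq_self_iff_true, true_and, mul_ite, ite_mul, mul_one, one_mul, mul_zero,
      zero_mul, sub_zero, zero_sub, add_zero, zero_add]
  rw [Finset.sum_congr rfl fun k _ => site k, Finset.sum_add_distrib,
    Finset.sum_ite_irrel, Finset.sum_ite_irrel, Finset.sum_const_zero]

include hxx hdd hxd in
lemma br_DX (a b c e : Fin n) :
    Dop d a b * Xop x c e - Xop x c e * Dop d a b =
      (if c = b then ((if e = a then ((t : ℕ) : Module.End ℂ E) else 0) - Pop x d e a) else 0)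
      - (if c = a then ((if e = b then ((t : ℕ) : Module.End ℂ E) else 0) - Pop x d e b) else 0)
      + (if e = b then Pop x d c a else 0) - (if e = a then Pop x d c b else 0) := by
  unfold Dop Xop
  rw [sum_comm_diag _ _ (fun k l hkl => by
    rw [comm4' _ _ _ _ _ _ _ _ (hxd l c k b) (hdx' x d hxd l c k a)
      (hdx' x d hxd l e k b) (hdx' x d hxd l e k a)]
    simp [hkl, Ne.symm hkl])]
  have site : ∀ k : Fin t, d k a * d k b * (x k c * x k e) - x k c * x k e * (d k a * d k b)
      = ((if c = b then d k a * x k e else 0) - (if c = a then d k b * x k e else 0))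
        + ((if e = b then x k c * d k a else 0) - (if e = a then x k c * d k b else 0)) := fun k => by
    rw [comm4' _ _ _ _ _ _ _ _ (hxd k c k b) (hdx' x d hxd k c k a)
      (hdx' x d hxd k e k b) (hdx' x d hxd k e k a)]
    simp only [eq_self_iff_true, true_and, mul_ite, ite_mul, mul_one, one_mul, mul_zero,
      zero_mul, sub_zero, zero_sub, add_zero, zero_add]
    abel
  rw [Finset.sum_congr rfl fun k _ => site k, Finset.sum_add_distrib, Finset.sum_sub_distrib,
    Finset.sum_sub_distrib, Finset.sum_ite_irrel, Finset.sum_ite_irrel, Finset.sum_ite_irrel,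
    Finset.sum_ite_irrel, Finset.sum_const_zero, sum_dx x d hxd a e, sum_dx x d hxd b e]
  have hca : (∑ k, x k c * d k a) = Pop x d c a := rfl
  have hcb : (∑ k, x k c * d k b) = Pop x d c b := rfl
  rw [hca, hcb]
  by_cases h1 : c = b <;> by_cases h2 : c = a <;> by_cases h3 : e = b <;> by_cases h4 : e = a <;>
    simp only [if_pos, if_neg, h1, h2, h3, h4, ite_true, ite_false, if_true, if_false] <;> abel

include hdd in
lemma br_DD (a b c e : Fin n) :
    Dop d a b * Dop d c e - Dop d c e * Dop d a b = 0 := by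
  unfold Dop
  rw [sum_comm_diag _ _ (fun k l hkl => by
    rw [comm4' _ _ _ _ _ _ _ _ (hdd l c k b) (hdd k a l c) (hdd k b l e) (hdd k a l e)]
    simp)]
  have site : ∀ k : Fin t, d k a * d k b * (d k c * d k e) - d k c * d k e * (d k a * d k b)
      = (0 : Module.End ℂ E) := fun k => by
    rw [comm4' _ _ _ _ _ _ _ _ (hdd k c k b) (hdd k a k c) (hdd k b k e) (hdd k a k e)]
    simp
  rw [Finset.sum_congr rfl fun k _ => site k, Finset.sum_const_zero]

include hxx in
lemma br_XX (a b c e : Fin n) :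
    Xop x a b * Xop x c e - Xop x c e * Xop x a b = 0 := by
  unfold Xop
  rw [sum_comm_diag _ _ (fun k l hkl => by
    rw [comm4' _ _ _ _ _ _ _ _ (hxx l c k b) (hxx k a l c) (hxx k b l e) (hxx k a l e)]
    simp)]
  have site : ∀ k : Fin t, x k a * x k b * (x k c * x k e) - x k c * x k e * (x k a * x k b)
      = (0 : Module.End ℂ E) := fun k => by
    rw [comm4' _ _ _ _ _ _ _ _ (hxx k c k b) (hxx k a k c) (hxx k b k e) (hxx k a k e)]
    simp
  rw [Finset.sum_congr rfl fun k _ => site k, Finset.sum_const_zero]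

include hxx hdd hxd in
lemma core_P_left (a b : Fin n) (hab : a ≠ b) (hba : b ≠ a) :
    (Pop x d b a * Pop x d a b + Dop d a b * Xop x b a) * Pop x d a a - Pop x d a a * (Pop x d b a * Pop x d a b + Dop d a b * Xop x b a) = 0 := by
  have z0 : (Xop x b a + Xop x a b) = 0 := Xswap x hxx b a
  have z1 : (Pop x d a a * Xop x a b - Xop x a b * Pop x d a a - (Xop x a b + 0)) = 0 := sub_eq_zero_of_eq (by
      have w := br_PX x d hxx hdd hxd a a a b
      simp only [if_neg hba, if_pos (show a = a from rfl)] at w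
      exact w)
  have z2 : (Pop x d a a * Dop d a b - Dop d a b * Pop x d a a - (-Dop d a b - 0)) = 0 := sub_eq_zero_of_eq (by
      have w := br_PD x d hxx hdd hxd a a a b
      simp only [if_neg hab, if_pos (show a = a from rfl)] at w
      exact w)
  have z3 : (Pop x d b a * Pop x d a b - Pop x d a b * Pop x d b a - (Pop x d b b - Pop x d a a)) = 0 := sub_eq_zero_of_eq (by
      have w := br_PP x d hxx hdd hxd b a a b
      simp only [if_pos (show a = a from rfl), if_pos (show b = b from rfl)] at w
      exact w)
  have z4 : (Pop x d b b * Pop x d a a - Pop x d a a * Pop x d b b - (0 - 0)) = 0 := sub_eq_zero_of_eq (by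
      have w := br_PP x d hxx hdd hxd b b a a
      simp only [if_neg hab, if_neg hba] at w
      exact w)
  have z5 : (Pop x d b a * Pop x d a a - Pop x d a a * Pop x d b a - (Pop x d b a - 0)) = 0 := sub_eq_zero_of_eq (by
      have w := br_PP x d hxx hdd hxd b a a a
      simp only [if_neg hba, if_pos (show a = a from rfl)] at w
      exact w)
  have z6 : (Pop x d a b * Pop x d a a - Pop x d a a * Pop x d a b - (0 - Pop x d a b)) = 0 := sub_eq_zero_of_eq (by
      have w := br_PP x d hxx hdd hxd a b a a
      simp only [if_neg hab, if_pos (show a = a from rfl)] at w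
      exact w)
  have cert : (Pop x d b a * Pop x d a b + Dop d a b * Xop x b a) * Pop x d a a - Pop x d a a * (Pop x d b a * Pop x d a b + Dop d a b * Xop x b a) =
      (Dop d a b) * (Xop x b a + Xop x a b) * (Pop x d a a)
      + (Dop d a b) * (Pop x d a a * Xop x a b - Xop x a b * Pop x d a a - (Xop x a b + 0))
      + (Pop x d a a * Dop d a b - Dop d a b * Pop x d a a - (-Dop d a b - 0)) * (Xop x a b)
      - (Pop x d a a) * (Dop d a b) * (Xop x b a + Xop x a b)
      - (Pop x d a a) * (Pop x d b a * Pop x d a b - Pop x d a b * Pop x d b a - (Pop x d b b - Pop x d a a))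
      + (Pop x d b a * Pop x d a b - Pop x d a b * Pop x d b a - (Pop x d b b - Pop x d a a)) * (Pop x d a a)
      + (Pop x d b b * Pop x d a a - Pop x d a a * Pop x d b b - (0 - 0))
      + (Pop x d a b) * (Pop x d b a * Pop x d a a - Pop x d a a * Pop x d b a - (Pop x d b a - 0))
      + (Pop x d a b * Pop x d a a - Pop x d a a * Pop x d a b - (0 - Pop x d a b)) * (Pop x d b a) := by
    noncomm_ring
  rw [cert, z0, z1, z2, z3, z4, z5, z6]
  simp

include hxx hdd hxd in
lemma core_P_right (a b : Fin n) (hab : a ≠ b) (hba : b ≠ a) :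
    (Pop x d b a * Pop x d a b + Dop d a b * Xop x b a) * Pop x d b b - Pop x d b b * (Pop x d b a * Pop x d a b + Dop d a b * Xop x b a) = 0 := by
  have z0 : (Xop x b a + Xop x a b) = 0 := Xswap x hxx b a
  have z1 : (Pop x d b b * Xop x a b - Xop x a b * Pop x d b b - (0 + Xop x a b)) = 0 := sub_eq_zero_of_eq (by
      have w := br_PX x d hxx hdd hxd b b a b
      simp only [if_neg hab, if_pos (show b = b from rfl)] at w
      exact w)
  have z2 : (Pop x d b b * Dop d a b - Dop d a b * Pop x d b b - (-0 - Dop d a b)) = 0 := sub_eq_zero_of_eq (by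
      have w := br_PD x d hxx hdd hxd b b a b
      simp only [if_neg hba, if_pos (show b = b from rfl)] at w
      exact w)
  have z3 : (Pop x d b a * Pop x d a b - Pop x d a b * Pop x d b a - (Pop x d b b - Pop x d a a)) = 0 := sub_eq_zero_of_eq (by
      have w := br_PP x d hxx hdd hxd b a a b
      simp only [if_pos (show a = a from rfl), if_pos (show b = b from rfl)] at w
      exact w)
  have z4 : (Pop x d b b * Pop x d b a - Pop x d b a * Pop x d b b - (Pop x d b a - 0)) = 0 := sub_eq_zero_of_eq (by
      have w := br_PP x d hxx hdd hxd b b b a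
      simp only [if_neg hba, if_pos (show b = b from rfl)] at w
      exact w)
  have z5 : (Pop x d b b * Pop x d a b - Pop x d a b * Pop x d b b - (0 - Pop x d a b)) = 0 := sub_eq_zero_of_eq (by
      have w := br_PP x d hxx hdd hxd b b a b
      simp only [if_neg hab, if_pos (show b = b from rfl)] at w
      exact w)
  have cert : (Pop x d b a * Pop x d a b + Dop d a b * Xop x b a) * Pop x d b b - Pop x d b b * (Pop x d b a * Pop x d a b + Dop d a b * Xop x b a) =
      (Dop d a b) * (Xop x b a + Xop x a b) * (Pop x d b b)
      + (Dop d a b) * (Pop x d b b * Xop x a b - Xop x a b * Pop x d b b - (0 + Xop x a b))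
      + (Pop x d b b * Dop d a b - Dop d a b * Pop x d b b - (-0 - Dop d a b)) * (Xop x a b)
      + (Pop x d b a * Pop x d a b - Pop x d a b * Pop x d b a - (Pop x d b b - Pop x d a a)) * (Pop x d b b)
      - (Pop x d b b) * (Dop d a b) * (Xop x b a + Xop x a b)
      - (Pop x d b b * Pop x d b a - Pop x d b a * Pop x d b b - (Pop x d b a - 0)) * (Pop x d a b)
      - (Pop x d b a * Pop x d a b - Pop x d a b * Pop x d b a - (Pop x d b b - Pop x d a a))
      - (Pop x d b a) * (Pop x d b b * Pop x d a b - Pop x d a b * Pop x d b b - (0 - Pop x d a b))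
      + (Pop x d b a * Pop x d a b - Pop x d a b * Pop x d b a - (Pop x d b b - Pop x d a a))
      - (Pop x d b a * Pop x d a b - Pop x d a b * Pop x d b a - (Pop x d b b - Pop x d a a)) * (Pop x d b b) := by
    noncomm_ring
  rw [cert, z0, z1, z2, z3, z4, z5]
  simp

include hxx hdd hxd in
lemma core_P_other (a b e : Fin n) (hab : a ≠ b) (hba : b ≠ a) (hae : a ≠ e) (hea : e ≠ a) (hbe : b ≠ e) (heb : e ≠ b) :
    (Pop x d b a * Pop x d a b + Dop d a b * Xop x b a) * Pop x d e e - Pop x d e e * (Pop x d b a * Pop x d a b + Dop d a b * Xop x b a) = 0 := by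
  have z0 : (Xop x b a + Xop x a b) = 0 := Xswap x hxx b a
  have z1 : (Pop x d e e * Xop x a b - Xop x a b * Pop x d e e - (0 + 0)) = 0 := sub_eq_zero_of_eq (by
      have w := br_PX x d hxx hdd hxd e e a b
      simp only [if_neg hae, if_neg hbe] at w
      exact w)
  have z2 : (Pop x d e e * Dop d a b - Dop d a b * Pop x d e e - (-0 - 0)) = 0 := sub_eq_zero_of_eq (by
      have w := br_PD x d hxx hdd hxd e e a b
      simp only [if_neg hea, if_neg heb] at w
      exact w)
  have z3 : (Pop x d b a * Pop x d a b - Pop x d a b * Pop x d b a - (Pop x d b b - Pop x d a a)) = 0 := sub_eq_zero_of_eq (by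
      have w := br_PP x d hxx hdd hxd b a a b
      simp only [if_pos (show a = a from rfl), if_pos (show b = b from rfl)] at w
      exact w)
  have z4 : (Pop x d e e * Pop x d b a - Pop x d b a * Pop x d e e - (0 - 0)) = 0 := sub_eq_zero_of_eq (by
      have w := br_PP x d hxx hdd hxd e e b a
      simp only [if_neg hbe, if_neg hea] at w
      exact w)
  have z5 : (Pop x d e e * Pop x d a b - Pop x d a b * Pop x d e e - (0 - 0)) = 0 := sub_eq_zero_of_eq (by
      have w := br_PP x d hxx hdd hxd e e a b
      simp only [if_neg hae, if_neg heb] at w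
      exact w)
  have cert : (Pop x d b a * Pop x d a b + Dop d a b * Xop x b a) * Pop x d e e - Pop x d e e * (Pop x d b a * Pop x d a b + Dop d a b * Xop x b a) =
      (Dop d a b) * (Xop x b a + Xop x a b) * (Pop x d e e)
      + (Dop d a b) * (Pop x d e e * Xop x a b - Xop x a b * Pop x d e e - (0 + 0))
      + (Pop x d e e * Dop d a b - Dop d a b * Pop x d e e - (-0 - 0)) * (Xop x a b)
      + (Pop x d b a * Pop x d a b - Pop x d a b * Pop x d b a - (Pop x d b b - Pop x d a a)) * (Pop x d e e)
      - (Pop x d e e) * (Dop d a b) * (Xop x b a + Xop x a b)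
      - (Pop x d e e * Pop x d b a - Pop x d b a * Pop x d e e - (0 - 0)) * (Pop x d a b)
      - (Pop x d b a) * (Pop x d e e * Pop x d a b - Pop x d a b * Pop x d e e - (0 - 0))
      - (Pop x d b a * Pop x d a b - Pop x d a b * Pop x d b a - (Pop x d b b - Pop x d a a)) * (Pop x d e e) := by
    noncomm_ring
  rw [cert, z0, z1, z2, z3, z4, z5]
  simp

include hxx hdd hxd in
lemma core_swap (a b : Fin n) (hab : a ≠ b) (hba : b ≠ a) :
    (Pop x d a b * Pop x d b a + Dop d b a * Xop x a b) - (Pop x d b a * Pop x d a b + Dop d a b * Xop x b a) - (Pop x d a a - Pop x d b b) = 0 := by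
  have z0 : (Xop x b a + Xop x a b) = 0 := Xswap x hxx b a
  have z1 : (Dop d b a + Dop d a b) = 0 := Dswap d hdd b a
  have z2 : (Pop x d b a * Pop x d a b - Pop x d a b * Pop x d b a - (Pop x d b b - Pop x d a a)) = 0 := sub_eq_zero_of_eq (by
      have w := br_PP x d hxx hdd hxd b a a b
      simp only [if_pos (show a = a from rfl), if_pos (show b = b from rfl)] at w
      exact w)
  have cert : (Pop x d a b * Pop x d b a + Dop d b a * Xop x a b) - (Pop x d b a * Pop x d a b + Dop d a b * Xop x b a) - (Pop x d a a - Pop x d b b) =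
      -(Dop d a b) * (Xop x b a + Xop x a b)
      + (Dop d b a + Dop d a b) * (Xop x a b)
      - (Pop x d b a * Pop x d a b - Pop x d a b * Pop x d b a - (Pop x d b b - Pop x d a a)) := by
    noncomm_ring
  rw [cert, z0, z1, z2]
  simp

include hxx hdd hxd in
lemma core_disjoint (a b c e : Fin n) (hab : a ≠ b) (hac : a ≠ c) (hae : a ≠ e) (hba : b ≠ a) (hbc : b ≠ c) (hbe : b ≠ e) (hca : c ≠ a) (hcb : c ≠ b) (hce : c ≠ e) (hea : e ≠ a) (heb : e ≠ b) (hec : e ≠ c) :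
    (Pop x d b a * Pop x d a b + Dop d a b * Xop x b a) * (Pop x d e c * Pop x d c e + Dop d c e * Xop x e c) - (Pop x d e c * Pop x d c e + Dop d c e * Xop x e c) * (Pop x d b a * Pop x d a b + Dop d a b * Xop x b a) = 0 := by
  have z0 : (Xop x b a + Xop x a b) = 0 := Xswap x hxx b a
  have z1 : (Xop x e c + Xop x c e) = 0 := Xswap x hxx e c
  have z2 : (Dop d c e * Xop x a b - Xop x a b * Dop d c e - (0 - 0 + 0 - 0)) = 0 := sub_eq_zero_of_eq (by
      have w := br_DX x d hxx hdd hxd c e a b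
      simp only [if_neg hac, if_neg hae, if_neg hbc, if_neg hbe] at w
      exact w)
  have z3 : (Pop x d e c * Xop x a b - Xop x a b * Pop x d e c - (0 + 0)) = 0 := sub_eq_zero_of_eq (by
      have w := br_PX x d hxx hdd hxd e c a b
      simp only [if_neg hac, if_neg hbc] at w
      exact w)
  have z4 : (Pop x d e c * Dop d a b - Dop d a b * Pop x d e c - (-0 - 0)) = 0 := sub_eq_zero_of_eq (by
      have w := br_PD x d hxx hdd hxd e c a b
      simp only [if_neg hea, if_neg heb] at w
      exact w)
  have z5 : (Dop d a b * Xop x c e - Xop x c e * Dop d a b - (0 - 0 + 0 - 0)) = 0 := sub_eq_zero_of_eq (by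
      have w := br_DX x d hxx hdd hxd a b c e
      simp only [if_neg hca, if_neg hcb, if_neg hea, if_neg heb] at w
      exact w)
  have z6 : (Dop d c e * Dop d a b - Dop d a b * Dop d c e) = 0 := br_DD d hdd c e a b
  have z7 : (Xop x c e * Xop x a b - Xop x a b * Xop x c e) = 0 := br_XX x hxx c e a b
  have z8 : (Pop x d b a * Xop x c e - Xop x c e * Pop x d b a - (0 + 0)) = 0 := sub_eq_zero_of_eq (by
      have w := br_PX x d hxx hdd hxd b a c e
      simp only [if_neg hca, if_neg hea] at w
      exact w)
  have z9 : (Pop x d b a * Dop d c e - Dop d c e * Pop x d b a - (-0 - 0)) = 0 := sub_eq_zero_of_eq (by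
      have w := br_PD x d hxx hdd hxd b a c e
      simp only [if_neg hbc, if_neg hbe] at w
      exact w)
  have z10 : (Pop x d a b * Xop x c e - Xop x c e * Pop x d a b - (0 + 0)) = 0 := sub_eq_zero_of_eq (by
      have w := br_PX x d hxx hdd hxd a b c e
      simp only [if_neg hcb, if_neg heb] at w
      exact w)
  have z11 : (Pop x d a b * Dop d c e - Dop d c e * Pop x d a b - (-0 - 0)) = 0 := sub_eq_zero_of_eq (by
      have w := br_PD x d hxx hdd hxd a b c e
      simp only [if_neg hac, if_neg hae] at w
      exact w)
  have z12 : (Pop x d b a * Pop x d a b - Pop x d a b * Pop x d b a - (Pop x d b b - Pop x d a a)) = 0 := sub_eq_zero_of_eq (by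
      have w := br_PP x d hxx hdd hxd b a a b
      simp only [if_pos (show a = a from rfl), if_pos (show b = b from rfl)] at w
      exact w)
  have z13 : (Pop x d e c * Pop x d c e - Pop x d c e * Pop x d e c - (Pop x d e e - Pop x d c c)) = 0 := sub_eq_zero_of_eq (by
      have w := br_PP x d hxx hdd hxd e c c e
      simp only [if_pos (show c = c from rfl), if_pos (show e = e from rfl)] at w
      exact w)
  have z14 : (Pop x d c e * Xop x a b - Xop x a b * Pop x d c e - (0 + 0)) = 0 := sub_eq_zero_of_eq (by
      have w := br_PX x d hxx hdd hxd c e a b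
      simp only [if_neg hae, if_neg hbe] at w
      exact w)
  have z15 : (Pop x d c e * Dop d a b - Dop d a b * Pop x d c e - (-0 - 0)) = 0 := sub_eq_zero_of_eq (by
      have w := br_PD x d hxx hdd hxd c e a b
      simp only [if_neg hca, if_neg hcb] at w
      exact w)
  have z16 : (Pop x d c c * Pop x d b a - Pop x d b a * Pop x d c c - (0 - 0)) = 0 := sub_eq_zero_of_eq (by
      have w := br_PP x d hxx hdd hxd c c b a
      simp only [if_neg hbc, if_neg hca] at w
      exact w)
  have z17 : (Pop x d c c * Pop x d a b - Pop x d a b * Pop x d c c - (0 - 0)) = 0 := sub_eq_zero_of_eq (by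
      have w := br_PP x d hxx hdd hxd c c a b
      simp only [if_neg hac, if_neg hcb] at w
      exact w)
  have z18 : (Pop x d e e * Pop x d b a - Pop x d b a * Pop x d e e - (0 - 0)) = 0 := sub_eq_zero_of_eq (by
      have w := br_PP x d hxx hdd hxd e e b a
      simp only [if_neg hbe, if_neg hea] at w
      exact w)
  have z19 : (Pop x d e e * Pop x d a b - Pop x d a b * Pop x d e e - (0 - 0)) = 0 := sub_eq_zero_of_eq (by
      have w := br_PP x d hxx hdd hxd e e a b
      simp only [if_neg hae, if_neg heb] at w
      exact w)
  have z20 : (Pop x d e c * Pop x d b a - Pop x d b a * Pop x d e c - (0 - 0)) = 0 := sub_eq_zero_of_eq (by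
      have w := br_PP x d hxx hdd hxd e c b a
      simp only [if_neg hbc, if_neg hea] at w
      exact w)
  have z21 : (Pop x d c e * Pop x d b a - Pop x d b a * Pop x d c e - (0 - 0)) = 0 := sub_eq_zero_of_eq (by
      have w := br_PP x d hxx hdd hxd c e b a
      simp only [if_neg hbe, if_neg hca] at w
      exact w)
  have z22 : (Pop x d e c * Pop x d a b - Pop x d a b * Pop x d e c - (0 - 0)) = 0 := sub_eq_zero_of_eq (by
      have w := br_PP x d hxx hdd hxd e c a b
      simp only [if_neg hac, if_neg heb] at w
      exact w)
  have z23 : (Pop x d c e * Pop x d a b - Pop x d a b * Pop x d c e - (0 - 0)) = 0 := sub_eq_zero_of_eq (by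
      have w := br_PP x d hxx hdd hxd c e a b
      simp only [if_neg hae, if_neg hcb] at w
      exact w)
  have cert : (Pop x d b a * Pop x d a b + Dop d a b * Xop x b a) * (Pop x d e c * Pop x d c e + Dop d c e * Xop x e c) - (Pop x d e c * Pop x d c e + Dop d c e * Xop x e c) * (Pop x d b a * Pop x d a b + Dop d a b * Xop x b a) =
      (Dop d a b) * (Xop x b a + Xop x a b) * (Dop d c e) * (Xop x e c)
      - (Dop d a b) * (Xop x a b) * (Dop d c e) * (Xop x e c + Xop x c e)
      - (Dop d a b) * (Dop d c e * Xop x a b - Xop x a b * Dop d c e - (0 - 0 + 0 - 0)) * (Xop x c e)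
      + (Dop d a b) * (Xop x b a + Xop x a b) * (Pop x d e c) * (Pop x d c e)
      + (Dop d a b) * (Pop x d e c * Xop x a b - Xop x a b * Pop x d e c - (0 + 0)) * (Pop x d c e)
      + (Pop x d e c * Dop d a b - Dop d a b * Pop x d e c - (-0 - 0)) * (Xop x a b) * (Pop x d c e)
      - (Dop d c e) * (Xop x e c + Xop x c e) * (Dop d a b) * (Xop x b a)
      + (Dop d c e) * (Xop x c e) * (Dop d a b) * (Xop x b a + Xop x a b)
      + (Dop d c e) * (Dop d a b * Xop x c e - Xop x c e * Dop d a b - (0 - 0 + 0 - 0)) * (Xop x a b)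
      - (Dop d c e * Dop d a b - Dop d a b * Dop d c e) * (Xop x c e) * (Xop x a b)
      - (Dop d a b) * (Dop d c e) * (Xop x c e * Xop x a b - Xop x a b * Xop x c e)
      - (Dop d c e) * (Xop x e c + Xop x c e) * (Pop x d b a) * (Pop x d a b)
      - (Dop d c e) * (Pop x d b a * Xop x c e - Xop x c e * Pop x d b a - (0 + 0)) * (Pop x d a b)
      - (Pop x d b a * Dop d c e - Dop d c e * Pop x d b a - (-0 - 0)) * (Xop x c e) * (Pop x d a b)
      - (Pop x d b a) * (Dop d c e) * (Pop x d a b * Xop x c e - Xop x c e * Pop x d a b - (0 + 0))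
      - (Pop x d b a) * (Pop x d a b * Dop d c e - Dop d c e * Pop x d a b - (-0 - 0)) * (Xop x c e)
      + (Pop x d b a * Pop x d a b - Pop x d a b * Pop x d b a - (Pop x d b b - Pop x d a a)) * (Dop d c e) * (Xop x c e)
      + (Pop x d b a) * (Pop x d a b) * (Dop d c e) * (Xop x e c + Xop x c e)
      - (Pop x d b a * Pop x d a b - Pop x d a b * Pop x d b a - (Pop x d b b - Pop x d a a)) * (Dop d c e) * (Xop x c e)
      + (Pop x d b a * Pop x d a b - Pop x d a b * Pop x d b a - (Pop x d b b - Pop x d a a)) * (Pop x d e c) * (Pop x d c e)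
      - (Pop x d a a) * (Pop x d e c * Pop x d c e - Pop x d c e * Pop x d e c - (Pop x d e e - Pop x d c c))
      + (Pop x d b b) * (Pop x d e c * Pop x d c e - Pop x d c e * Pop x d e c - (Pop x d e e - Pop x d c c))
      + (Pop x d a b) * (Pop x d b a) * (Pop x d e c * Pop x d c e - Pop x d c e * Pop x d e c - (Pop x d e e - Pop x d c c))
      + (Pop x d e c) * (Dop d a b) * (Pop x d c e * Xop x a b - Xop x a b * Pop x d c e - (0 + 0))
      + (Pop x d e c) * (Pop x d c e * Dop d a b - Dop d a b * Pop x d c e - (-0 - 0)) * (Xop x a b)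
      - (Pop x d e c * Pop x d c e - Pop x d c e * Pop x d e c - (Pop x d e e - Pop x d c c)) * (Dop d a b) * (Xop x a b)
      - (Pop x d e c) * (Pop x d c e) * (Dop d a b) * (Xop x b a + Xop x a b)
      + (Pop x d e c * Pop x d c e - Pop x d c e * Pop x d e c - (Pop x d e e - Pop x d c c)) * (Dop d a b) * (Xop x a b)
      - (Pop x d e c * Pop x d c e - Pop x d c e * Pop x d e c - (Pop x d e e - Pop x d c c)) * (Pop x d b a) * (Pop x d a b)
      + (Pop x d c c * Pop x d b a - Pop x d b a * Pop x d c c - (0 - 0)) * (Pop x d a b)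
      + (Pop x d b a) * (Pop x d c c * Pop x d a b - Pop x d a b * Pop x d c c - (0 - 0))
      + (Pop x d b a * Pop x d a b - Pop x d a b * Pop x d b a - (Pop x d b b - Pop x d a a)) * (Pop x d c c)
      - (Pop x d e e * Pop x d b a - Pop x d b a * Pop x d e e - (0 - 0)) * (Pop x d a b)
      - (Pop x d b a) * (Pop x d e e * Pop x d a b - Pop x d a b * Pop x d e e - (0 - 0))
      - (Pop x d b a * Pop x d a b - Pop x d a b * Pop x d b a - (Pop x d b b - Pop x d a a)) * (Pop x d e e)
      - (Pop x d c e) * (Pop x d e c * Pop x d b a - Pop x d b a * Pop x d e c - (0 - 0)) * (Pop x d a b)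
      - (Pop x d c e * Pop x d b a - Pop x d b a * Pop x d c e - (0 - 0)) * (Pop x d e c) * (Pop x d a b)
      - (Pop x d b a) * (Pop x d c e) * (Pop x d e c * Pop x d a b - Pop x d a b * Pop x d e c - (0 - 0))
      - (Pop x d b a) * (Pop x d c e * Pop x d a b - Pop x d a b * Pop x d c e - (0 - 0)) * (Pop x d e c)
      - (Pop x d b a * Pop x d a b - Pop x d a b * Pop x d b a - (Pop x d b b - Pop x d a a)) * (Pop x d c e) * (Pop x d e c) := by
    noncomm_ring
  rw [cert, z0, z1, z2, z3, z4, z5, z6, z7, z8, z9, z10, z11, z12, z13, z14, z15, z16, z17, z18, z19, z20, z21, z22, z23]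
  simp

include hxx hdd hxd in
lemma core_triple (a b c : Fin n) (hab : a ≠ b) (hac : a ≠ c) (hba : b ≠ a) (hbc : b ≠ c) (hca : c ≠ a) (hcb : c ≠ b) :
    (Pop x d b a * Pop x d a b + Dop d a b * Xop x b a) * ((Pop x d c a * Pop x d a c + Dop d a c * Xop x c a) + (Pop x d c b * Pop x d b c + Dop d b c * Xop x c b)) - ((Pop x d c a * Pop x d a c + Dop d a c * Xop x c a) + (Pop x d c b * Pop x d b c + Dop d b c * Xop x c b)) * (Pop x d b a * Pop x d a b + Dop d a b * Xop x b a) = 0 := by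
  have z0 : (Xop x b a + Xop x a b) = 0 := Xswap x hxx b a
  have z1 : (Xop x c a + Xop x a c) = 0 := Xswap x hxx c a
  have z2 : (Dop d a c * Xop x a b - Xop x a b * Dop d a c - (0 - (0 - Pop x d b c) + 0 - 0)) = 0 := sub_eq_zero_of_eq (by
      have w := br_DX x d hxx hdd hxd a c a b
      simp only [if_neg hac, if_neg hba, if_neg hbc, if_pos (show a = a from rfl)] at w
      exact w)
  have z3 : (Pop x d b c * Dop d a b - Dop d a b * Pop x d b c - (-0 - Dop d a c)) = 0 := sub_eq_zero_of_eq (by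
      have w := br_PD x d hxx hdd hxd b c a b
      simp only [if_neg hba, if_pos (show b = b from rfl)] at w
      exact w)
  have z4 : (Xop x c b + Xop x b c) = 0 := Xswap x hxx c b
  have z5 : (Dop d b c * Xop x a b - Xop x a b * Dop d b c - (0 - 0 + 0 - Pop x d a c)) = 0 := sub_eq_zero_of_eq (by
      have w := br_DX x d hxx hdd hxd b c a b
      simp only [if_neg hab, if_neg hac, if_neg hbc, if_pos (show b = b from rfl)] at w
      exact w)
  have z6 : (Pop x d a c * Dop d a b - Dop d a b * Pop x d a c - (-Dop d c b - 0)) = 0 := sub_eq_zero_of_eq (by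
      have w := br_PD x d hxx hdd hxd a c a b
      simp only [if_neg hab, if_pos (show a = a from rfl)] at w
      exact w)
  have z7 : (Dop d c b + Dop d b c) = 0 := Dswap d hdd c b
  have z8 : (Pop x d c a * Xop x a b - Xop x a b * Pop x d c a - (Xop x c b + 0)) = 0 := sub_eq_zero_of_eq (by
      have w := br_PX x d hxx hdd hxd c a a b
      simp only [if_neg hba, if_pos (show a = a from rfl)] at w
      exact w)
  have z9 : (Pop x d a c * Xop x b c - Xop x b c * Pop x d a c - (0 + Xop x b a)) = 0 := sub_eq_zero_of_eq (by
      have w := br_PX x d hxx hdd hxd a c b c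
      simp only [if_neg hbc, if_pos (show c = c from rfl)] at w
      exact w)
  have z10 : (Pop x d c a * Dop d a b - Dop d a b * Pop x d c a - (-0 - 0)) = 0 := sub_eq_zero_of_eq (by
      have w := br_PD x d hxx hdd hxd c a a b
      simp only [if_neg hca, if_neg hcb] at w
      exact w)
  have z11 : (Pop x d c b * Xop x a b - Xop x a b * Pop x d c b - (0 + Xop x a c)) = 0 := sub_eq_zero_of_eq (by
      have w := br_PX x d hxx hdd hxd c b a b
      simp only [if_neg hab, if_pos (show b = b from rfl)] at w
      exact w)
  have z12 : (Pop x d b c * Xop x a c - Xop x a c * Pop x d b c - (0 + Xop x a b)) = 0 := sub_eq_zero_of_eq (by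
      have w := br_PX x d hxx hdd hxd b c a c
      simp only [if_neg hac, if_pos (show c = c from rfl)] at w
      exact w)
  have z13 : (Pop x d c b * Dop d a b - Dop d a b * Pop x d c b - (-0 - 0)) = 0 := sub_eq_zero_of_eq (by
      have w := br_PD x d hxx hdd hxd c b a b
      simp only [if_neg hca, if_neg hcb] at w
      exact w)
  have z14 : (Dop d a b * Xop x a c - Xop x a c * Dop d a b - (0 - (0 - Pop x d c b) + 0 - 0)) = 0 := sub_eq_zero_of_eq (by
      have w := br_DX x d hxx hdd hxd a b a c
      simp only [if_neg hab, if_neg hca, if_neg hcb, if_pos (show a = a from rfl)] at w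
      exact w)
  have z15 : (Pop x d c b * Dop d a c - Dop d a c * Pop x d c b - (-0 - Dop d a b)) = 0 := sub_eq_zero_of_eq (by
      have w := br_PD x d hxx hdd hxd c b a c
      simp only [if_neg hca, if_pos (show c = c from rfl)] at w
      exact w)
  have z16 : (Dop d a c * Dop d a b - Dop d a b * Dop d a c) = 0 := br_DD d hdd a c a b
  have z17 : (Xop x a c * Xop x a b - Xop x a b * Xop x a c) = 0 := br_XX x hxx a c a b
  have z18 : (Pop x d b a * Xop x a c - Xop x a c * Pop x d b a - (Xop x b c + 0)) = 0 := sub_eq_zero_of_eq (by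
      have w := br_PX x d hxx hdd hxd b a a c
      simp only [if_neg hca, if_pos (show a = a from rfl)] at w
      exact w)
  have z19 : (Pop x d a b * Xop x b c - Xop x b c * Pop x d a b - (Xop x a c + 0)) = 0 := sub_eq_zero_of_eq (by
      have w := br_PX x d hxx hdd hxd a b b c
      simp only [if_neg hcb, if_pos (show b = b from rfl)] at w
      exact w)
  have z20 : (Pop x d a b * Dop d a c - Dop d a c * Pop x d a b - (-Dop d b c - 0)) = 0 := sub_eq_zero_of_eq (by
      have w := br_PD x d hxx hdd hxd a b a c
      simp only [if_neg hac, if_pos (show a = a from rfl)] at w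
      exact w)
  have z21 : (Pop x d b a * Dop d a c - Dop d a c * Pop x d b a - (-0 - 0)) = 0 := sub_eq_zero_of_eq (by
      have w := br_PD x d hxx hdd hxd b a a c
      simp only [if_neg hba, if_neg hbc] at w
      exact w)
  have z22 : (Dop d a b * Xop x b c - Xop x b c * Dop d a b - ((0 - Pop x d c a) - 0 + 0 - 0)) = 0 := sub_eq_zero_of_eq (by
      have w := br_DX x d hxx hdd hxd a b b c
      simp only [if_neg hba, if_neg hca, if_neg hcb, if_pos (show b = b from rfl)] at w
      exact w)
  have z23 : (Pop x d c a * Dop d b c - Dop d b c * Pop x d c a - (-0 - Dop d b a)) = 0 := sub_eq_zero_of_eq (by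
      have w := br_PD x d hxx hdd hxd c a b c
      simp only [if_neg hcb, if_pos (show c = c from rfl)] at w
      exact w)
  have z24 : (Dop d b a + Dop d a b) = 0 := Dswap d hdd b a
  have z25 : (Dop d b c * Dop d a b - Dop d a b * Dop d b c) = 0 := br_DD d hdd b c a b
  have z26 : (Xop x b c * Xop x a b - Xop x a b * Xop x b c) = 0 := br_XX x hxx b c a b
  have z27 : (Pop x d b a * Xop x b c - Xop x b c * Pop x d b a - (0 + 0)) = 0 := sub_eq_zero_of_eq (by
      have w := br_PX x d hxx hdd hxd b a b c
      simp only [if_neg hba, if_neg hca] at w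
      exact w)
  have z28 : (Pop x d b a * Dop d b c - Dop d b c * Pop x d b a - (-Dop d a c - 0)) = 0 := sub_eq_zero_of_eq (by
      have w := br_PD x d hxx hdd hxd b a b c
      simp only [if_neg hbc, if_pos (show b = b from rfl)] at w
      exact w)
  have z29 : (Pop x d a b * Xop x a c - Xop x a c * Pop x d a b - (0 + 0)) = 0 := sub_eq_zero_of_eq (by
      have w := br_PX x d hxx hdd hxd a b a c
      simp only [if_neg hab, if_neg hcb] at w
      exact w)
  have z30 : (Pop x d a b * Dop d b c - Dop d b c * Pop x d a b - (-0 - 0)) = 0 := sub_eq_zero_of_eq (by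
      have w := br_PD x d hxx hdd hxd a b b c
      simp only [if_neg hab, if_neg hac] at w
      exact w)
  have z31 : (Pop x d b a * Pop x d a b - Pop x d a b * Pop x d b a - (Pop x d b b - Pop x d a a)) = 0 := sub_eq_zero_of_eq (by
      have w := br_PP x d hxx hdd hxd b a a b
      simp only [if_pos (show a = a from rfl), if_pos (show b = b from rfl)] at w
      exact w)
  have z32 : (Pop x d c a * Pop x d a c - Pop x d a c * Pop x d c a - (Pop x d c c - Pop x d a a)) = 0 := sub_eq_zero_of_eq (by
      have w := br_PP x d hxx hdd hxd c a a c
      simp only [if_pos (show a = a from rfl), if_pos (show c = c from rfl)] at w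
      exact w)
  have z33 : (Pop x d b b * Pop x d a a - Pop x d a a * Pop x d b b - (0 - 0)) = 0 := sub_eq_zero_of_eq (by
      have w := br_PP x d hxx hdd hxd b b a a
      simp only [if_neg hab, if_neg hba] at w
      exact w)
  have z34 : (Pop x d b b * Pop x d a c - Pop x d a c * Pop x d b b - (0 - 0)) = 0 := sub_eq_zero_of_eq (by
      have w := br_PP x d hxx hdd hxd b b a c
      simp only [if_neg hab, if_neg hbc] at w
      exact w)
  have z35 : (Pop x d b a * Pop x d a a - Pop x d a a * Pop x d b a - (Pop x d b a - 0)) = 0 := sub_eq_zero_of_eq (by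
      have w := br_PP x d hxx hdd hxd b a a a
      simp only [if_neg hba, if_pos (show a = a from rfl)] at w
      exact w)
  have z36 : (Pop x d a b * Pop x d a a - Pop x d a a * Pop x d a b - (0 - Pop x d a b)) = 0 := sub_eq_zero_of_eq (by
      have w := br_PP x d hxx hdd hxd a b a a
      simp only [if_neg hab, if_pos (show a = a from rfl)] at w
      exact w)
  have z37 : (Pop x d b a * Pop x d a c - Pop x d a c * Pop x d b a - (Pop x d b c - 0)) = 0 := sub_eq_zero_of_eq (by
      have w := br_PP x d hxx hdd hxd b a a c
      simp only [if_neg hbc, if_pos (show a = a from rfl)] at w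
      exact w)
  have z38 : (Pop x d c b * Pop x d b c - Pop x d b c * Pop x d c b - (Pop x d c c - Pop x d b b)) = 0 := sub_eq_zero_of_eq (by
      have w := br_PP x d hxx hdd hxd c b b c
      simp only [if_pos (show b = b from rfl), if_pos (show c = c from rfl)] at w
      exact w)
  have z39 : (Pop x d a c * Xop x a b - Xop x a b * Pop x d a c - (0 + 0)) = 0 := sub_eq_zero_of_eq (by
      have w := br_PX x d hxx hdd hxd a c a b
      simp only [if_neg hac, if_neg hbc] at w
      exact w)
  have z40 : (Pop x d c c * Pop x d b a - Pop x d b a * Pop x d c c - (0 - 0)) = 0 := sub_eq_zero_of_eq (by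
      have w := br_PP x d hxx hdd hxd c c b a
      simp only [if_neg hbc, if_neg hca] at w
      exact w)
  have z41 : (Pop x d c c * Pop x d a b - Pop x d a b * Pop x d c c - (0 - 0)) = 0 := sub_eq_zero_of_eq (by
      have w := br_PP x d hxx hdd hxd c c a b
      simp only [if_neg hac, if_neg hcb] at w
      exact w)
  have z42 : (Pop x d c a * Pop x d b a - Pop x d b a * Pop x d c a - (0 - 0)) = 0 := sub_eq_zero_of_eq (by
      have w := br_PP x d hxx hdd hxd c a b a
      simp only [if_neg hba, if_neg hca] at w
      exact w)
  have z43 : (Pop x d c a * Pop x d a b - Pop x d a b * Pop x d c a - (Pop x d c b - 0)) = 0 := sub_eq_zero_of_eq (by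
      have w := br_PP x d hxx hdd hxd c a a b
      simp only [if_neg hcb, if_pos (show a = a from rfl)] at w
      exact w)
  have z44 : (Pop x d a c * Pop x d a a - Pop x d a a * Pop x d a c - (0 - Pop x d a c)) = 0 := sub_eq_zero_of_eq (by
      have w := br_PP x d hxx hdd hxd a c a a
      simp only [if_neg hac, if_pos (show a = a from rfl)] at w
      exact w)
  have z45 : (Pop x d a c * Pop x d a b - Pop x d a b * Pop x d a c - (0 - 0)) = 0 := sub_eq_zero_of_eq (by
      have w := br_PP x d hxx hdd hxd a c a b
      simp only [if_neg hab, if_neg hac] at w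
      exact w)
  have z46 : (Pop x d b c * Xop x a b - Xop x a b * Pop x d b c - (0 + 0)) = 0 := sub_eq_zero_of_eq (by
      have w := br_PX x d hxx hdd hxd b c a b
      simp only [if_neg hac, if_neg hbc] at w
      exact w)
  have z47 : (Pop x d b b * Pop x d b a - Pop x d b a * Pop x d b b - (Pop x d b a - 0)) = 0 := sub_eq_zero_of_eq (by
      have w := br_PP x d hxx hdd hxd b b b a
      simp only [if_neg hba, if_pos (show b = b from rfl)] at w
      exact w)
  have z48 : (Pop x d b b * Pop x d a b - Pop x d a b * Pop x d b b - (0 - Pop x d a b)) = 0 := sub_eq_zero_of_eq (by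
      have w := br_PP x d hxx hdd hxd b b a b
      simp only [if_neg hab, if_pos (show b = b from rfl)] at w
      exact w)
  have z49 : (Pop x d c b * Pop x d b a - Pop x d b a * Pop x d c b - (Pop x d c a - 0)) = 0 := sub_eq_zero_of_eq (by
      have w := br_PP x d hxx hdd hxd c b b a
      simp only [if_neg hca, if_pos (show b = b from rfl)] at w
      exact w)
  have z50 : (Pop x d b c * Pop x d a b - Pop x d a b * Pop x d b c - (0 - Pop x d a c)) = 0 := sub_eq_zero_of_eq (by
      have w := br_PP x d hxx hdd hxd b c a b
      simp only [if_neg hac, if_pos (show b = b from rfl)] at w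
      exact w)
  have z51 : (Pop x d b c * Pop x d b a - Pop x d b a * Pop x d b c - (0 - 0)) = 0 := sub_eq_zero_of_eq (by
      have w := br_PP x d hxx hdd hxd b c b a
      simp only [if_neg hba, if_neg hbc] at w
      exact w)
  have z52 : (Pop x d c b * Pop x d a b - Pop x d a b * Pop x d c b - (0 - 0)) = 0 := sub_eq_zero_of_eq (by
      have w := br_PP x d hxx hdd hxd c b a b
      simp only [if_neg hab, if_neg hcb] at w
      exact w)
  have cert : (Pop x d b a * Pop x d a b + Dop d a b * Xop x b a) * ((Pop x d c a * Pop x d a c + Dop d a c * Xop x c a) + (Pop x d c b * Pop x d b c + Dop d b c * Xop x c b)) - ((Pop x d c a * Pop x d a c + Dop d a c * Xop x c a) + (Pop x d c b * Pop x d b c + Dop d b c * Xop x c b)) * (Pop x d b a * Pop x d a b + Dop d a b * Xop x b a) =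
      (Dop d a b) * (Xop x b a + Xop x a b) * (Dop d a c) * (Xop x c a)
      - (Dop d a b) * (Xop x a b) * (Dop d a c) * (Xop x c a + Xop x a c)
      - (Dop d a b) * (Dop d a c * Xop x a b - Xop x a b * Dop d a c - (0 - (0 - Pop x d b c) + 0 - 0)) * (Xop x a c)
      + (Pop x d b c * Dop d a b - Dop d a b * Pop x d b c - (-0 - Dop d a c)) * (Xop x a c)
      + (Dop d a b) * (Xop x b a + Xop x a b) * (Dop d b c) * (Xop x c b)
      - (Dop d a b) * (Xop x a b) * (Dop d b c) * (Xop x c b + Xop x b c)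
      - (Dop d a b) * (Dop d b c * Xop x a b - Xop x a b * Dop d b c - (0 - 0 + 0 - Pop x d a c)) * (Xop x b c)
      - (Pop x d a c * Dop d a b - Dop d a b * Pop x d a c - (-Dop d c b - 0)) * (Xop x b c)
      + (Dop d c b + Dop d b c) * (Xop x b c)
      + (Dop d a b) * (Xop x b a + Xop x a b) * (Pop x d c a) * (Pop x d a c)
      + (Dop d a b) * (Pop x d c a * Xop x a b - Xop x a b * Pop x d c a - (Xop x c b + 0)) * (Pop x d a c)
      + (Dop d a b) * (Xop x c b + Xop x b c) * (Pop x d a c)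
      + (Dop d a b) * (Pop x d a c * Xop x b c - Xop x b c * Pop x d a c - (0 + Xop x b a))
      + (Dop d a b) * (Xop x b a + Xop x a b)
      + (Pop x d a c * Dop d a b - Dop d a b * Pop x d a c - (-Dop d c b - 0)) * (Xop x b c)
      - (Dop d c b + Dop d b c) * (Xop x b c)
      + (Pop x d c a * Dop d a b - Dop d a b * Pop x d c a - (-0 - 0)) * (Xop x a b) * (Pop x d a c)
      + (Dop d a b) * (Xop x b a + Xop x a b) * (Pop x d c b) * (Pop x d b c)
      + (Dop d a b) * (Pop x d c b * Xop x a b - Xop x a b * Pop x d c b - (0 + Xop x a c)) * (Pop x d b c)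
      - (Dop d a b) * (Pop x d b c * Xop x a c - Xop x a c * Pop x d b c - (0 + Xop x a b))
      - (Pop x d b c * Dop d a b - Dop d a b * Pop x d b c - (-0 - Dop d a c)) * (Xop x a c)
      + (Pop x d c b * Dop d a b - Dop d a b * Pop x d c b - (-0 - 0)) * (Xop x a b) * (Pop x d b c)
      - (Dop d a c) * (Xop x c a + Xop x a c) * (Dop d a b) * (Xop x b a)
      + (Dop d a c) * (Xop x a c) * (Dop d a b) * (Xop x b a + Xop x a b)
      + (Dop d a c) * (Dop d a b * Xop x a c - Xop x a c * Dop d a b - (0 - (0 - Pop x d c b) + 0 - 0)) * (Xop x a b)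
      - (Pop x d c b * Dop d a c - Dop d a c * Pop x d c b - (-0 - Dop d a b)) * (Xop x a b)
      - (Dop d a c * Dop d a b - Dop d a b * Dop d a c) * (Xop x a c) * (Xop x a b)
      - (Dop d a b) * (Dop d a c) * (Xop x a c * Xop x a b - Xop x a b * Xop x a c)
      - (Dop d a c) * (Xop x c a + Xop x a c) * (Pop x d b a) * (Pop x d a b)
      - (Dop d a c) * (Pop x d b a * Xop x a c - Xop x a c * Pop x d b a - (Xop x b c + 0)) * (Pop x d a b)
      + (Dop d a c) * (Pop x d a b * Xop x b c - Xop x b c * Pop x d a b - (Xop x a c + 0))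
      + (Pop x d a b * Dop d a c - Dop d a c * Pop x d a b - (-Dop d b c - 0)) * (Xop x b c)
      - (Pop x d b a * Dop d a c - Dop d a c * Pop x d b a - (-0 - 0)) * (Xop x a c) * (Pop x d a b)
      - (Dop d b c) * (Xop x c b + Xop x b c) * (Dop d a b) * (Xop x b a)
      + (Dop d b c) * (Xop x b c) * (Dop d a b) * (Xop x b a + Xop x a b)
      + (Dop d b c) * (Dop d a b * Xop x b c - Xop x b c * Dop d a b - ((0 - Pop x d c a) - 0 + 0 - 0)) * (Xop x a b)
      + (Pop x d c a * Dop d b c - Dop d b c * Pop x d c a - (-0 - Dop d b a)) * (Xop x a b)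
      - (Dop d b a + Dop d a b) * (Xop x a b)
      - (Dop d b c * Dop d a b - Dop d a b * Dop d b c) * (Xop x b c) * (Xop x a b)
      - (Dop d a b) * (Dop d b c) * (Xop x b c * Xop x a b - Xop x a b * Xop x b c)
      - (Dop d b c) * (Xop x c b + Xop x b c) * (Pop x d b a) * (Pop x d a b)
      - (Dop d b c) * (Pop x d b a * Xop x b c - Xop x b c * Pop x d b a - (0 + 0)) * (Pop x d a b)
      - (Pop x d b a * Dop d b c - Dop d b c * Pop x d b a - (-Dop d a c - 0)) * (Xop x b c) * (Pop x d a b)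
      - (Dop d a c) * (Pop x d a b * Xop x b c - Xop x b c * Pop x d a b - (Xop x a c + 0))
      - (Pop x d a b * Dop d a c - Dop d a c * Pop x d a b - (-Dop d b c - 0)) * (Xop x b c)
      - (Pop x d b a) * (Dop d a c) * (Pop x d a b * Xop x a c - Xop x a c * Pop x d a b - (0 + 0))
      - (Pop x d b a) * (Pop x d a b * Dop d a c - Dop d a c * Pop x d a b - (-Dop d b c - 0)) * (Xop x a c)
      - (Pop x d b a) * (Dop d b c) * (Pop x d a b * Xop x b c - Xop x b c * Pop x d a b - (Xop x a c + 0))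
      - (Pop x d b a) * (Pop x d a b * Dop d b c - Dop d b c * Pop x d a b - (-0 - 0)) * (Xop x b c)
      + (Pop x d b a * Pop x d a b - Pop x d a b * Pop x d b a - (Pop x d b b - Pop x d a a)) * (Dop d a c) * (Xop x a c)
      + (Pop x d b a) * (Pop x d a b) * (Dop d a c) * (Xop x c a + Xop x a c)
      - (Pop x d b a * Pop x d a b - Pop x d a b * Pop x d b a - (Pop x d b b - Pop x d a a)) * (Dop d a c) * (Xop x a c)
      + (Pop x d b a * Pop x d a b - Pop x d a b * Pop x d b a - (Pop x d b b - Pop x d a a)) * (Dop d b c) * (Xop x b c)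
      + (Pop x d b a) * (Pop x d a b) * (Dop d b c) * (Xop x c b + Xop x b c)
      - (Pop x d b a * Pop x d a b - Pop x d a b * Pop x d b a - (Pop x d b b - Pop x d a a)) * (Dop d b c) * (Xop x b c)
      + (Pop x d b a * Pop x d a b - Pop x d a b * Pop x d b a - (Pop x d b b - Pop x d a a)) * (Pop x d c a) * (Pop x d a c)
      - (Pop x d a a) * (Pop x d c a * Pop x d a c - Pop x d a c * Pop x d c a - (Pop x d c c - Pop x d a a))
      + (Pop x d b b) * (Pop x d c a * Pop x d a c - Pop x d a c * Pop x d c a - (Pop x d c c - Pop x d a a))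
      - (Pop x d b b * Pop x d a a - Pop x d a a * Pop x d b b - (0 - 0))
      + (Pop x d b b * Pop x d a c - Pop x d a c * Pop x d b b - (0 - 0)) * (Pop x d c a)
      + (Pop x d a b) * (Pop x d b a) * (Pop x d c a * Pop x d a c - Pop x d a c * Pop x d c a - (Pop x d c c - Pop x d a a))
      - (Pop x d a b) * (Pop x d b a * Pop x d a a - Pop x d a a * Pop x d b a - (Pop x d b a - 0))
      - (Pop x d a b * Pop x d a a - Pop x d a a * Pop x d a b - (0 - Pop x d a b)) * (Pop x d b a)
      + (Pop x d a b) * (Pop x d b a * Pop x d a c - Pop x d a c * Pop x d b a - (Pop x d b c - 0)) * (Pop x d c a)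
      + (Pop x d b a * Pop x d a b - Pop x d a b * Pop x d b a - (Pop x d b b - Pop x d a a)) * (Pop x d c b) * (Pop x d b c)
      - (Pop x d a a) * (Pop x d c b * Pop x d b c - Pop x d b c * Pop x d c b - (Pop x d c c - Pop x d b b))
      + (Pop x d b b) * (Pop x d c b * Pop x d b c - Pop x d b c * Pop x d c b - (Pop x d c c - Pop x d b b))
      + (Pop x d a b) * (Pop x d b a) * (Pop x d c b * Pop x d b c - Pop x d b c * Pop x d c b - (Pop x d c c - Pop x d b b))
      + (Pop x d c a) * (Dop d a b) * (Pop x d a c * Xop x a b - Xop x a b * Pop x d a c - (0 + 0))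
      + (Pop x d c a) * (Pop x d a c * Dop d a b - Dop d a b * Pop x d a c - (-Dop d c b - 0)) * (Xop x a b)
      - (Pop x d c a) * (Dop d c b + Dop d b c) * (Xop x a b)
      - (Pop x d c a * Pop x d a c - Pop x d a c * Pop x d c a - (Pop x d c c - Pop x d a a)) * (Dop d a b) * (Xop x a b)
      - (Pop x d c a) * (Pop x d a c) * (Dop d a b) * (Xop x b a + Xop x a b)
      + (Pop x d c a * Pop x d a c - Pop x d a c * Pop x d c a - (Pop x d c c - Pop x d a a)) * (Dop d a b) * (Xop x a b)
      - (Pop x d c a * Pop x d a c - Pop x d a c * Pop x d c a - (Pop x d c c - Pop x d a a)) * (Pop x d b a) * (Pop x d a b)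
      + (Pop x d a a) * (Pop x d b a * Pop x d a b - Pop x d a b * Pop x d b a - (Pop x d b b - Pop x d a a))
      - (Pop x d c c * Pop x d b a - Pop x d b a * Pop x d c c - (0 - 0)) * (Pop x d a b)
      - (Pop x d b a) * (Pop x d c c * Pop x d a b - Pop x d a b * Pop x d c c - (0 - 0))
      - (Pop x d b a * Pop x d a b - Pop x d a b * Pop x d b a - (Pop x d b b - Pop x d a a)) * (Pop x d c c)
      - (Pop x d a c) * (Pop x d c a * Pop x d b a - Pop x d b a * Pop x d c a - (0 - 0)) * (Pop x d a b)
      - (Pop x d a c) * (Pop x d b a) * (Pop x d c a * Pop x d a b - Pop x d a b * Pop x d c a - (Pop x d c b - 0))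
      - (Pop x d a c) * (Pop x d b a * Pop x d a b - Pop x d a b * Pop x d b a - (Pop x d b b - Pop x d a a)) * (Pop x d c a)
      + (Pop x d a c * Pop x d a a - Pop x d a a * Pop x d a c - (0 - Pop x d a c)) * (Pop x d c a)
      - (Pop x d a c * Pop x d a b - Pop x d a b * Pop x d a c - (0 - 0)) * (Pop x d b a) * (Pop x d c a)
      + (Pop x d c b) * (Dop d a b) * (Pop x d b c * Xop x a b - Xop x a b * Pop x d b c - (0 + 0))
      + (Pop x d c b) * (Pop x d b c * Dop d a b - Dop d a b * Pop x d b c - (-0 - Dop d a c)) * (Xop x a b)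
      - (Pop x d c b * Pop x d b c - Pop x d b c * Pop x d c b - (Pop x d c c - Pop x d b b)) * (Dop d a b) * (Xop x a b)
      - (Pop x d c b) * (Pop x d b c) * (Dop d a b) * (Xop x b a + Xop x a b)
      + (Pop x d c b * Pop x d b c - Pop x d b c * Pop x d c b - (Pop x d c c - Pop x d b b)) * (Dop d a b) * (Xop x a b)
      - (Pop x d c b * Pop x d b c - Pop x d b c * Pop x d c b - (Pop x d c c - Pop x d b b)) * (Pop x d b a) * (Pop x d a b)
      + (Pop x d b b * Pop x d b a - Pop x d b a * Pop x d b b - (Pop x d b a - 0)) * (Pop x d a b)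
      + (Pop x d b a * Pop x d a b - Pop x d a b * Pop x d b a - (Pop x d b b - Pop x d a a))
      + (Pop x d b a) * (Pop x d b b * Pop x d a b - Pop x d a b * Pop x d b b - (0 - Pop x d a b))
      - (Pop x d b a * Pop x d a b - Pop x d a b * Pop x d b a - (Pop x d b b - Pop x d a a))
      + (Pop x d b a * Pop x d a b - Pop x d a b * Pop x d b a - (Pop x d b b - Pop x d a a)) * (Pop x d b b)
      - (Pop x d c c * Pop x d b a - Pop x d b a * Pop x d c c - (0 - 0)) * (Pop x d a b)
      - (Pop x d b a) * (Pop x d c c * Pop x d a b - Pop x d a b * Pop x d c c - (0 - 0))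
      - (Pop x d b a * Pop x d a b - Pop x d a b * Pop x d b a - (Pop x d b b - Pop x d a a)) * (Pop x d c c)
      - (Pop x d b c) * (Pop x d c b * Pop x d b a - Pop x d b a * Pop x d c b - (Pop x d c a - 0)) * (Pop x d a b)
      - (Pop x d b c) * (Pop x d c a * Pop x d a b - Pop x d a b * Pop x d c a - (Pop x d c b - 0))
      - (Pop x d b c * Pop x d a b - Pop x d a b * Pop x d b c - (0 - Pop x d a c)) * (Pop x d c a)
      - (Pop x d b c * Pop x d b a - Pop x d b a * Pop x d b c - (0 - 0)) * (Pop x d c b) * (Pop x d a b)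
      - (Pop x d b a) * (Pop x d b c) * (Pop x d c b * Pop x d a b - Pop x d a b * Pop x d c b - (0 - 0))
      - (Pop x d b a) * (Pop x d b c * Pop x d a b - Pop x d a b * Pop x d b c - (0 - Pop x d a c)) * (Pop x d c b)
      + (Pop x d b a * Pop x d a c - Pop x d a c * Pop x d b a - (Pop x d b c - 0)) * (Pop x d c b)
      - (Pop x d b a * Pop x d a b - Pop x d a b * Pop x d b a - (Pop x d b b - Pop x d a a)) * (Pop x d b c) * (Pop x d c b) := by
    noncomm_ring
  rw [cert, z0, z1, z2, z3, z4, z5, z6, z7, z8, z9, z10, z11, z12, z13, z14, z15, z16, z17, z18, z19, z20, z21, z22, z23, z24, z25, z26, z27, z28, z29, z30, z31, z32, z33, z34, z35, z36, z37, z38, z39, z40, z41, z42, z43, z44, z45, z46, z47, z48, z49, z50, z51, z52]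
  simp

noncomputable def Kop (x d : Fin t → Fin n → Module.End ℂ E) (a b : Fin n) : Module.End ℂ E :=
  (2:ℂ)⁻¹ • (Pop x d b a * Pop x d a b + Dop d a b * Xop x b a)

lemma commute_smul₂ {A B : Module.End ℂ E} (c c' : ℂ) (h : A * B - B * A = 0) :
    (c • A) * (c' • B) = (c' • B) * (c • A) := by
  have hh : A * B = B * A := by rwa [sub_eq_zero] at h
  rw [smul_mul_assoc, mul_smul_comm, smul_mul_assoc, mul_smul_comm, hh, smul_comm]

lemma commute_smul_left {A B : Module.End ℂ E} (c : ℂ) (h : A * B - B * A = 0) :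
    (c • A) * B = B * (c • A) := by
  have hh : A * B = B * A := by rwa [sub_eq_zero] at h
  rw [smul_mul_assoc, mul_smul_comm, hh]

lemma smul_comm_sub (u v : ℂ) (X Y : Module.End ℂ E) :
    (u • X) * (v • Y) - (v • Y) * (u • X) = (u*v) • (X*Y - Y*X) := by
  rw [smul_mul_assoc, mul_smul_comm, smul_mul_assoc, mul_smul_comm, smul_smul, smul_smul,
    mul_comm v u, ← smul_sub]

lemma comm_shift {R : Type*} [Ring R] (X Y Z : R) (h : X*(Y+Z) = (Y+Z)*X) :
    X*Z - Z*X = -(X*Y - Y*X) := by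
  have h' : X*Y + X*Z = Y*X + Z*X := by rw [mul_add, add_mul] at h; exact h
  have h3 : X*Z - Z*X + (X*Y - Y*X) = 0 := by
    calc X*Z - Z*X + (X*Y - Y*X) = (X*Y + X*Z) - (Y*X + Z*X) := by abel
    _ = 0 := sub_eq_zero_of_eq h'
  exact eq_neg_of_add_eq_zero_left h3

include hxx hdd hxd in
lemma Kop_triple (a b c : Fin n) (hab : a ≠ b) (hac : a ≠ c) (hbc : b ≠ c) :
    Kop x d a b * (Kop x d a c + Kop x d b c) = (Kop x d a c + Kop x d b c) * Kop x d a b := by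
  unfold Kop
  rw [← smul_add]
  exact commute_smul₂ _ _
    (core_triple x d hxx hdd hxd a b c hab hac hab.symm hbc hac.symm hbc.symm)

include hxx hdd hxd in
lemma Kop_disjoint (a b c e : Fin n) (hab : a ≠ b) (hac : a ≠ c) (hae : a ≠ e)
    (hbc : b ≠ c) (hbe : b ≠ e) (hce : c ≠ e) :
    Kop x d a b * Kop x d c e = Kop x d c e * Kop x d a b := by
  unfold Kop
  exact commute_smul₂ _ _
    (core_disjoint x d hxx hdd hxd a b c e hab hac hae hab.symm hbc hbe hac.symm hbc.symm
      hce hae.symm hbe.symm hce.symm)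

include hxx hdd hxd in
lemma Kop_commP (a b e : Fin n) (hab : a ≠ b) :
    Kop x d a b * Pop x d e e = Pop x d e e * Kop x d a b := by
  unfold Kop
  by_cases hea : e = a
  · subst hea
    exact commute_smul_left _ (core_P_left x d hxx hdd hxd e b hab hab.symm)
  · by_cases heb : e = b
    · subst heb
      exact commute_smul_left _ (core_P_right x d hxx hdd hxd a e hab hab.symm)
    · exact commute_smul_left _ (core_P_other x d hxx hdd hxd a b e hab hab.symm
        (fun h => hea h.symm) hea (fun h => heb h.symm) heb)

include hxx hdd hxd in
lemma P_diag_comm (e f : Fin n) :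
    Pop x d e e * Pop x d f f = Pop x d f f * Pop x d e e := by
  by_cases hef : e = f
  · subst hef; rfl
  · have hfe : f ≠ e := fun h => hef h.symm
    have w := br_PP x d hxx hdd hxd e e f f
    simp only [if_neg hfe, if_neg hef] at w
    exact sub_eq_zero.mp (by simpa using w)

include hxx hdd hxd in
lemma Kop_swap (a b : Fin n) (hab : a ≠ b) :
    Kop x d b a = Kop x d a b + (2:ℂ)⁻¹ • (Pop x d a a - Pop x d b b) := by
  unfold Kop
  rw [← smul_add]
  congr 1
  have h := core_swap x d hxx hdd hxd a b hab hab.symm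
  rw [sub_sub, sub_eq_zero] at h
  exact h

end
end FlatAux

open FlatAux in
/-- **Flatness of the dual connection (5.14).**  Under the orthogonal CAR setup,
with `K_{a,b} = (1/2)(M_{b,a} M_{a,b} + M_{-a,b} M_{b,-a})` and
`K̂_{a,b} = K_{min(a,b),max(a,b)}`, for every `z ∈ ℂ^n` with pairwise distinct
coordinates the endomorphisms `A_a(z) = Σ_{c≠a} (z_a - z_c)⁻¹ K̂_{a,c}` pairwise
commute; i.e., the connection `d + ℏ Σ_{a<b} dlog(z_a - z_b) K_{a,b}` is flat. -/
theorem flatness_dual_connection (t n : ℕ) (ht : 0 < t) (hn : 0 < n)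
    (E : Type*) [AddCommGroup E] [Module ℂ E]
    (x d : Fin t → Fin n → Module.End ℂ E)
    (hxx : ∀ k a l b, x k a * x l b + x l b * x k a = 0)
    (hdd : ∀ k a l b, d k a * d l b + d l b * d k a = 0)
    (hxd : ∀ k a l b, x k a * d l b + d l b * x k a =
      if k = l ∧ a = b then 1 else 0)
    (MP : Fin n → Fin n → Module.End ℂ E)
    (hMP : ∀ a b, MP a b = ∑ k : Fin t, ((2 : ℂ)⁻¹) • (x k a * d k b - d k b * x k a))
    (MN : Fin n → Fin n → Module.End ℂ E)
    (hMN : ∀ a b, MN a b = ∑ k : Fin t, ((2 : ℂ)⁻¹) • (d k a * d k b - d k b * d k a))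
    (MB : Fin n → Fin n → Module.End ℂ E)
    (hMB : ∀ b a, MB b a = ∑ k : Fin t, ((2 : ℂ)⁻¹) • (x k b * x k a - x k a * x k b))
    (K : Fin n → Fin n → Module.End ℂ E)
    (hK : ∀ a b, K a b = ((2 : ℂ)⁻¹) • (MP b a * MP a b + MN a b * MB b a))
    (Khat : Fin n → Fin n → Module.End ℂ E)
    (hKhat : ∀ a b, Khat a b = K (min a b) (max a b))
    (z : Fin n → ℂ) (hz : ∀ a b : Fin n, a ≠ b → z a ≠ z b)
    (A : Fin n → Module.End ℂ E)
    (hA : ∀ a, A a = ∑ c ∈ Finset.univ.erase a, (z a - z c)⁻¹ • Khat a c) :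
    ∀ a b : Fin n, a ≠ b → A a * A b = A b * A a := by
  classical
  -- Step 1: identify M-operators with P, D, X and K with Kop.
  have hMPP : ∀ p q : Fin n, p ≠ q → MP p q = Pop x d p q := by
    intro p q hpq
    rw [hMP]
    refine Finset.sum_congr rfl fun k _ => ?_
    have h := hxd k p k q
    rw [if_neg (fun hh => hpq hh.2)] at h
    rw [eq_neg_of_add_eq_zero_right h, sub_neg_eq_add, ← two_smul ℂ, smul_smul]
    norm_num
  have hMNN : ∀ p q : Fin n, p ≠ q → MN p q = Dop d p q := by
    intro p q hpq
    rw [hMN]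
    refine Finset.sum_congr rfl fun k _ => ?_
    have h := hdd k p k q
    rw [eq_neg_of_add_eq_zero_right h, sub_neg_eq_add, ← two_smul ℂ, smul_smul]
    norm_num
  have hMBB : ∀ p q : Fin n, p ≠ q → MB p q = Xop x p q := by
    intro p q hpq
    rw [hMB]
    refine Finset.sum_congr rfl fun k _ => ?_
    have h := hxx k p k q
    rw [eq_neg_of_add_eq_zero_right h, sub_neg_eq_add, ← two_smul ℂ, smul_smul]
    norm_num
  have hKK : ∀ p q : Fin n, p ≠ q → K p q = Kop x d p q := by
    intro p q hpq
    rw [hK, hMPP q p hpq.symm, hMPP p q hpq, hMNN p q hpq, hMBB q p hpq.symm]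
    rfl
  -- Step 2: Khat lemmas.
  have khat_symm : ∀ p q : Fin n, Khat p q = Khat q p := fun p q => by
    rw [hKhat, hKhat, min_comm, max_comm]
  have hKhatE : ∀ p q : Fin n, p ≠ q → ∃ c1 c2 : ℂ,
      Khat p q = Kop x d p q + (c1 • Pop x d p p + c2 • Pop x d q q) := by
    intro p q hpq
    rcases lt_or_gt_of_ne hpq with h | h
    · refine ⟨0, 0, ?_⟩
      rw [hKhat, min_eq_left h.le, max_eq_right h.le, hKK p q hpq]
      simp
    · refine ⟨(2:ℂ)⁻¹, -((2:ℂ)⁻¹), ?_⟩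
      rw [hKhat, min_eq_right h.le, max_eq_left h.le, hKK q p hpq.symm,
        Kop_swap x d hxx hdd hxd p q hpq, smul_sub, neg_smul, sub_eq_add_neg]
  have commPK : ∀ (p q e : Fin n), p ≠ q → ∀ c : ℂ,
      Commute (Kop x d p q) (c • Pop x d e e) :=
    fun p q e hpq c => Commute.smul_right (Kop_commP x d hxx hdd hxd p q e hpq) c
  have commW : ∀ (p q : Fin n), p ≠ q → ∀ (c1 c2 : ℂ) (e1 e2 : Fin n),
      Commute (Kop x d p q) (c1 • Pop x d e1 e1 + c2 • Pop x d e2 e2) :=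
    fun p q hpq c1 c2 e1 e2 => (commPK p q e1 hpq c1).add_right (commPK p q e2 hpq c2)
  have commWW : ∀ (c1 c2 : ℂ) (e1 e2 : Fin n) (c3 c4 : ℂ) (e3 e4 : Fin n),
      Commute (c1 • Pop x d e1 e1 + c2 • Pop x d e2 e2)
        (c3 • Pop x d e3 e3 + c4 • Pop x d e4 e4) := by
    have base : ∀ (u v : Fin n) (cu cv : ℂ),
        Commute (cu • Pop x d u u) (cv • Pop x d v v) := fun u v cu cv =>
      Commute.smul_right (Commute.smul_left (P_diag_comm x d hxx hdd hxd u v) cu) cv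
    intro c1 c2 e1 e2 c3 c4 e3 e4
    exact ((base e1 e3 c1 c3).add_right (base e1 e4 c1 c4)).add_left
      ((base e2 e3 c2 c3).add_right (base e2 e4 c2 c4))
  have khat_triple : ∀ p q r : Fin n, p ≠ q → p ≠ r → q ≠ r →
      Khat p q * (Khat p r + Khat q r) = (Khat p r + Khat q r) * Khat p q := by
    intro p q r hpq hpr hqr
    obtain ⟨a1, a2, h1⟩ := hKhatE p q hpq
    obtain ⟨b1, b2, h2⟩ := hKhatE p r hpr
    obtain ⟨c1, c2, h3⟩ := hKhatE q r hqr
    rw [h1, h2, h3, add_add_add_comm]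
    have cXY : Commute (Kop x d p q) (Kop x d p r + Kop x d q r) :=
      Kop_triple x d hxx hdd hxd p q r hpq hpr hqr
    have cXW : Commute (Kop x d p q)
        ((b1 • Pop x d p p + b2 • Pop x d r r) + (c1 • Pop x d q q + c2 • Pop x d r r)) :=
      (commW p q hpq b1 b2 p r).add_right (commW p q hpq c1 c2 q r)
    have cWY : Commute (a1 • Pop x d p p + a2 • Pop x d q q) (Kop x d p r + Kop x d q r) :=
      ((commW p r hpr a1 a2 p q).symm).add_right ((commW q r hqr a1 a2 p q).symm)
    have cWW := commWW a1 a2 p q b1 b2 p r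
    have cWW' := commWW a1 a2 p q c1 c2 q r
    exact Commute.add_left (cXY.add_right cXW) (cWY.add_right (cWW.add_right cWW'))
  have khat_disjoint : ∀ p q r s : Fin n, p ≠ q → p ≠ r → p ≠ s → q ≠ r → q ≠ s → r ≠ s →
      Commute (Khat p q) (Khat r s) := by
    intro p q r s hpq hpr hps hqr hqs hrs
    obtain ⟨a1, a2, h1⟩ := hKhatE p q hpq
    obtain ⟨b1, b2, h2⟩ := hKhatE r s hrs
    rw [h1, h2]
    have cXY : Commute (Kop x d p q) (Kop x d r s) :=
      Kop_disjoint x d hxx hdd hxd p q r s hpq hpr hps hqr hqs hrs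
    exact Commute.add_left (cXY.add_right (commW p q hpq b1 b2 r s))
      (((commW r s hrs a1 a2 p q).symm).add_right (commWW a1 a2 p q b1 b2 r s))
  have hzz : ∀ p q : Fin n, p ≠ q → z p - z q ≠ 0 := fun p q h => sub_ne_zero.mpr (hz p q h)
  -- Step 3: main computation.
  intro a b hab
  let Q : Fin n → Fin n → Module.End ℂ E := fun c dd =>
    ((z a - z c)⁻¹ • Khat a c) * ((z b - z dd)⁻¹ • Khat b dd) -
      ((z b - z dd)⁻¹ • Khat b dd) * ((z a - z c)⁻¹ • Khat a c)
  have hQ : ∀ c dd, Q c dd =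
      ((z a - z c)⁻¹ • Khat a c) * ((z b - z dd)⁻¹ • Khat b dd) -
      ((z b - z dd)⁻¹ • Khat b dd) * ((z a - z c)⁻¹ • Khat a c) := fun _ _ => rfl
  rw [hA a, hA b, ← sub_eq_zero, Finset.sum_mul_sum, Finset.sum_mul_sum,
    Finset.sum_comm (s := Finset.univ.erase b) (t := Finset.univ.erase a),
    ← Finset.sum_sub_distrib]
  have step1 : ∀ c ∈ Finset.univ.erase a,
      ((∑ dd ∈ Finset.univ.erase b,
          ((z a - z c)⁻¹ • Khat a c) * ((z b - z dd)⁻¹ • Khat b dd)) -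
        ∑ dd ∈ Finset.univ.erase b,
          ((z b - z dd)⁻¹ • Khat b dd) * ((z a - z c)⁻¹ • Khat a c)) =
      ∑ dd ∈ Finset.univ.erase b, Q c dd := by
    intro c _
    rw [← Finset.sum_sub_distrib]
  rw [Finset.sum_congr rfl step1]
  -- set surgery
  set S : Finset (Fin n) := (Finset.univ.erase a).erase b with hS
  have hbS : b ∉ S := Finset.notMem_erase b _
  have haS : a ∉ S := fun h => (Finset.mem_erase.mp (Finset.mem_of_mem_erase h)).1 rfl
  have hea : Finset.univ.erase a = insert b S := by
    rw [hS]
    exact (Finset.insert_erase (Finset.mem_erase.mpr ⟨hab.symm, Finset.mem_univ b⟩)).symm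
  have heb : Finset.univ.erase b = insert a S := by
    rw [hS, Finset.erase_right_comm]
    exact (Finset.insert_erase (Finset.mem_erase.mpr ⟨hab, Finset.mem_univ a⟩)).symm
  rw [hea, heb]
  have exp1 : ∀ c ∈ insert b S, ∑ dd ∈ insert a S, Q c dd = Q c a + ∑ dd ∈ S, Q c dd :=
    fun c _ => Finset.sum_insert haS
  rw [Finset.sum_congr rfl exp1, Finset.sum_insert hbS]
  -- diagonal reduction
  have memS : ∀ c ∈ S, c ≠ b ∧ c ≠ a := by
    intro c hc
    obtain ⟨hcb, hc2⟩ := Finset.mem_erase.mp hc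
    exact ⟨hcb, (Finset.mem_erase.mp hc2).1⟩
  have diag : ∀ c ∈ S, ∑ dd ∈ S, Q c dd = Q c c := by
    intro c hc
    obtain ⟨hcb, hca⟩ := memS c hc
    refine Finset.sum_eq_single_of_mem c hc (fun dd hdd hddc => ?_)
    obtain ⟨hddb, hdda⟩ := memS dd hdd
    rw [hQ, smul_comm_sub,
      Commute.eq (khat_disjoint a c b dd hca.symm hab (fun h => hdda h.symm) hcb
        (fun h => hddc h.symm) (fun h => hddb h.symm)), sub_self, smul_zero]
  have step2 : ∀ c ∈ S, Q c a + ∑ dd ∈ S, Q c dd = Q c a + Q c c := by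
    intro c hc; rw [diag c hc]
  rw [Finset.sum_congr rfl step2]
  have hQba : Q b a = 0 := by
    rw [hQ, khat_symm b a, smul_comm_sub, sub_self, smul_zero]
  rw [hQba, zero_add, ← Finset.sum_add_distrib]
  -- per-c vanishing
  have key : ∀ c ∈ S, Q b c + (Q c a + Q c c) = 0 := by
    intro c hc
    obtain ⟨hcb, hca⟩ := memS c hc
    have hac : a ≠ c := hca.symm
    have hbc : b ≠ c := hcb.symm
    have t1 : Khat a b * Khat b c - Khat b c * Khat a b =
        -(Khat a b * Khat a c - Khat a c * Khat a b) :=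
      comm_shift _ _ _ (khat_triple a b c hab hac hbc)
    have t2 : Khat a c * Khat b c - Khat b c * Khat a c =
        Khat a b * Khat a c - Khat a c * Khat a b := by
      have h := khat_triple a c b hac hab (fun h => hbc h.symm)
      rw [khat_symm c b] at h
      rw [comm_shift _ _ _ h, neg_sub]
    have t3 : Khat a c * Khat a b - Khat a b * Khat a c =
        -(Khat a b * Khat a c - Khat a c * Khat a b) := by rw [neg_sub]
    rw [hQ, hQ, hQ, khat_symm b a, smul_comm_sub, smul_comm_sub, smul_comm_sub,
      t1, t2, t3, smul_neg, smul_neg, ← neg_smul, ← neg_smul, ← add_smul, ← add_smul]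
    have sc : -((z a - z b)⁻¹ * (z b - z c)⁻¹) + (-((z a - z c)⁻¹ * (z b - z a)⁻¹) +
        (z a - z c)⁻¹ * (z b - z c)⁻¹) = 0 := by
      have n1 := hzz a b hab
      have n2 := hzz b c hbc
      have n3 := hzz a c hac
      have n4 : z b - z a ≠ 0 := hzz b a hab.symm
      field_simp
      ring
    rw [sc, zero_smul]
  rw [Finset.sum_congr rfl key, Finset.sum_const_zero]
end
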